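/- arXiv:1308.6005 — 2 statements merged into one kernel-verified Lean document; each statement's English description precedes it below -/
import Mathlib

section
/- If e_a and e_b are distinct edges of a tree T with θ_T(e_a) = θ_T(e_b), then e_a and e_b repel. -/
open SimpleGraph

/-- The multiset of sizes of the connected components of `G`. -/
noncomputable def componentSizes {V : Type*} [Finite V] (G : SimpleGraph V) : Multiset ℕ :=
  haveI : Fintype G.ConnectedComponent := Fintype.ofFinite _
  (Finset.univ : Finset G.ConnectedComponent).val.map fun c => c.supp.ncard

/-- `theta T S` is the partition (as a multiset) of `|V|` whose parts are the sizes of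
the connected components of `T` with the edges of `S` removed. -/
noncomputable def theta {V : Type*} [Finite V] (T : SimpleGraph V) (S : Set (Sym2 V)) :
    Multiset ℕ := componentSizes (T.deleteEdges S)

/-- The weight of a vertex `v` of a tree `T`: the maximal number of edges of a subtree
of `T` containing `v` as a leaf; equivalently, the maximal number of vertices of a
connected component of `T - v`. -/
noncomputable def weight {V : Type*} [Finite V] (T : SimpleGraph V) (v : V) : ℕ :=
  sSup (Set.range fun c : ((⊤ : T.Subgraph).deleteVerts {v}).coe.ConnectedComponent =>
    c.supp.ncard)

/-- The centroid of `T`: the set of vertices of minimal weight. -/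
def centroid {V : Type*} [Finite V] (T : SimpleGraph V) : Set V :=
  {v | ∀ u, weight T v ≤ weight T u}

/-- Two edges of `T` attract if some path in `T` contains both of them and has a
centroid of `T` as one endpoint. -/
def Attract {V : Type*} [Finite V] (T : SimpleGraph V) (ea eb : Sym2 V) : Prop :=
  ∃ (c x : V) (p : T.Walk c x), c ∈ centroid T ∧ p.IsPath ∧ ea ∈ p.edges ∧ eb ∈ p.edges

set_option linter.unusedSectionVars false
set_option linter.unusedVariables false
set_option maxHeartbeats 1000000

section Aux

variable {V : Type*} [Fintype V] {T : SimpleGraph V}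

lemma reach_del {z a b : V} (W : T.Walk a b) (hW : z ∉ W.support)
    (ha : a ∈ ((⊤ : T.Subgraph).deleteVerts {z}).verts)
    (hb : b ∈ ((⊤ : T.Subgraph).deleteVerts {z}).verts) :
    ((⊤ : T.Subgraph).deleteVerts {z}).coe.Reachable ⟨a, ha⟩ ⟨b, hb⟩ := by
  induction W with
  | nil => exact Reachable.refl _
  | @cons s t w h W' ih =>
    rw [Walk.support_cons, List.mem_cons] at hW
    push_neg at hW
    have ht : t ∈ ((⊤ : T.Subgraph).deleteVerts {z}).verts := by
      simp only [Subgraph.deleteVerts_verts, Subgraph.verts_top, Set.mem_diff,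
        Set.mem_singleton_iff]
      exact ⟨trivial, fun hzt => hW.2 (hzt ▸ W'.start_mem_support)⟩
    have hadj : ((⊤ : T.Subgraph).deleteVerts {z}).coe.Adj ⟨s, ha⟩ ⟨t, ht⟩ := by
      simp only [Subgraph.coe_adj, Subgraph.deleteVerts_adj, Subgraph.verts_top, Set.mem_univ,
        Set.mem_singleton_iff, Subgraph.top_adj]
      refine ⟨trivial, ?_, trivial, ?_, h⟩
      · exact fun hs => hW.1 hs.symm
      · intro hszz
        exact hW.2 (hszz ▸ W'.start_mem_support)
    exact (hadj.reachable).trans (ih hW.2 ht hb)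

lemma walk_del {z : V} :
    ∀ (a b : ((⊤ : T.Subgraph).deleteVerts {z}).verts)
      (_ : ((⊤ : T.Subgraph).deleteVerts {z}).coe.Walk a b),
      ∃ W : T.Walk a.1 b.1, z ∉ W.support := by
  intro a b w
  induction w with
  | @nil s =>
    refine ⟨Walk.nil, ?_⟩
    have := s.2
    simp only [Subgraph.deleteVerts_verts, Subgraph.verts_top, Set.mem_diff,
      Set.mem_singleton_iff] at this
    simp only [Walk.support_nil, List.mem_singleton]
    exact fun hz => this.2 hz.symm
  | @cons s t u h w' ih =>
    obtain ⟨W', hW'⟩ := ih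
    have hadj : T.Adj s.1 t.1 := by
      have := h
      simp only [Subgraph.coe_adj, Subgraph.deleteVerts_adj, Subgraph.top_adj] at this
      exact this.2.2.2.2
    refine ⟨Walk.cons hadj W', ?_⟩
    rw [Walk.support_cons, List.mem_cons]
    push_neg
    have := s.2
    simp only [Subgraph.deleteVerts_verts, Subgraph.verts_top, Set.mem_diff,
      Set.mem_singleton_iff] at this
    exact ⟨fun hz => this.2 hz.symm, hW'⟩

lemma reach_deleteEdges_of_walk {e : Sym2 V} {a b : V} (W : T.Walk a b) (h : e ∉ W.edges) :
    (T.deleteEdges {e}).Reachable a b :=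
  ⟨W.toDeleteEdges {e} (fun f hf => by rintro rfl; exact h hf)⟩

lemma walk_of_reach_deleteEdges {e : Sym2 V} {a b : V}
    (h : (T.deleteEdges {e}).Reachable a b) :
    ∃ W : T.Walk a b, e ∉ W.edges := by
  obtain ⟨w⟩ := h
  refine ⟨w.transfer T (fun f hf => ?_), ?_⟩
  · exact (edgeSet_subset_edgeSet.mpr (deleteEdges_le _)) (w.edges_subset_edgeSet hf)
  · rw [Walk.edges_transfer]
    intro hmem
    have := w.edges_subset_edgeSet hmem
    simp [edgeSet_deleteEdges] at this

lemma bridge_tree (hT : T.IsTree) {u v : V} (h : T.Adj u v) :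
    ¬ (T.deleteEdges {s(u,v)}).Reachable u v := by
  have hb := (isAcyclic_iff_forall_adj_isBridge.mp hT.2) h
  rw [isBridge_iff] at hb
  exact hb

lemma reach_or_aux (hT : T.IsTree) {u v : V} (h : T.Adj u v) {x y : V} (W : T.Walk x y) :
    (T.deleteEdges {s(u,v)}).Reachable x y ∨ (T.deleteEdges {s(u,v)}).Reachable x u ∨
      (T.deleteEdges {s(u,v)}).Reachable x v := by
  induction W with
  | nil => exact Or.inl (Reachable.refl _)
  | @cons s t _ h' W' ih =>
    by_cases he : s(s, t) = s(u, v)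
    · rw [Sym2.eq_iff] at he
      rcases he with ⟨rfl, rfl⟩ | ⟨rfl, rfl⟩
      · exact Or.inr (Or.inl (Reachable.refl _))
      · exact Or.inr (Or.inr (Reachable.refl _))
    · have hadj : (T.deleteEdges {s(u,v)}).Adj s t := by
        rw [deleteEdges_adj]
        exact ⟨h', by simpa using he⟩
      rcases ih with h1 | h1 | h1
      · exact Or.inl (hadj.reachable.trans h1)
      · exact Or.inr (Or.inl (hadj.reachable.trans h1))
      · exact Or.inr (Or.inr (hadj.reachable.trans h1))

lemma reach_or (hT : T.IsTree) {u v : V} (h : T.Adj u v) (x : V) :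
    (T.deleteEdges {s(u,v)}).Reachable x u ∨ (T.deleteEdges {s(u,v)}).Reachable x v := by
  obtain ⟨W⟩ := hT.1.preconnected x u
  rcases reach_or_aux hT h W with h1 | h1 | h1
  · exact Or.inl h1
  · exact Or.inl h1
  · exact Or.inr h1

lemma supp_sum {G' : SimpleGraph V} {C D : G'.ConnectedComponent} (hCD : C ≠ D)
    (hcover : ∀ x : V, x ∈ C.supp ∨ x ∈ D.supp) :
    C.supp.ncard + D.supp.ncard = Fintype.card V := by
  have hdisj : Disjoint C.supp D.supp := by
    rw [Set.disjoint_left]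
    intro x hx hx'
    rw [ConnectedComponent.mem_supp_iff] at hx hx'
    exact hCD (hx ▸ hx')
  have hunion : C.supp ∪ D.supp = Set.univ := by
    rw [Set.eq_univ_iff_forall]
    exact hcover
  have := Set.ncard_union_eq hdisj (Set.toFinite _) (Set.toFinite _)
  rw [hunion, Set.ncard_univ, Nat.card_eq_fintype_card] at this
  omega

lemma mem_theta {e : Sym2 V} (C : (T.deleteEdges {e}).ConnectedComponent) :
    C.supp.ncard ∈ theta T {e} := by
  unfold theta componentSizes
  exact Multiset.mem_map.mpr ⟨C, by simp, rfl⟩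

lemma theta_elem {e : Sym2 V} {k : ℕ} (hk : k ∈ theta T {e}) :
    ∃ C : (T.deleteEdges {e}).ConnectedComponent, C.supp.ncard = k := by
  unfold theta componentSizes at hk
  obtain ⟨C, _, hC⟩ := Multiset.mem_map.mp hk
  exact ⟨C, hC⟩

lemma supp_ncard_le_weight {z : V}
    (C : ((⊤ : T.Subgraph).deleteVerts {z}).coe.ConnectedComponent) :
    C.supp.ncard ≤ weight T z :=
  le_csSup (Set.Finite.bddAbove (Set.finite_range _)) ⟨C, rfl⟩

lemma weight_le {z : V} {m : ℕ}
    (hne : Nonempty ((⊤ : T.Subgraph).deleteVerts {z}).coe.ConnectedComponent)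
    (h : ∀ C : ((⊤ : T.Subgraph).deleteVerts {z}).coe.ConnectedComponent,
      C.supp.ncard ≤ m) : weight T z ≤ m := by
  apply csSup_le (Set.range_nonempty _)
  rintro k ⟨C, rfl⟩
  exact h C

lemma exists_decomp {c x : V} (p : T.Walk c x) {e : Sym2 V} (he : e ∈ p.edges) :
    ∃ (u v : V) (q : T.Walk c u) (ha : T.Adj u v) (r : T.Walk v x),
      e = s(u, v) ∧ p = q.append (Walk.cons ha r) := by
  induction p with
  | nil => simp at he
  | @cons s t _ h p' ih =>
    rw [Walk.edges_cons, List.mem_cons] at he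
    rcases he with he | he
    · exact ⟨s, t, Walk.nil, h, p', he, rfl⟩
    · obtain ⟨u, v, q, ha, r, heq, hp⟩ := ih he
      exact ⟨u, v, Walk.cons h q, ha, r, heq, by rw [hp, Walk.cons_append]⟩

lemma key (hT : T.IsTree) {c x u v ub vb : V} (hc : c ∈ centroid T)
    (q : T.Walk c u) (ha : T.Adj u v) (q2 : T.Walk v ub) (hb : T.Adj ub vb) (r2 : T.Walk vb x)
    (hp : (q.append (Walk.cons ha (q2.append (Walk.cons hb r2)))).IsPath)
    (hth : theta T {s(u,v)} = theta T {s(ub,vb)})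
    (hne : s(u,v) ≠ s(ub,vb)) : False := by
  classical
  have hedges : (q.append (Walk.cons ha (q2.append (Walk.cons hb r2)))).edges
      = q.edges ++ s(u,v) :: (q2.edges ++ s(ub,vb) :: r2.edges) := by
    simp [Walk.edges_append, Walk.edges_cons]
  have hnd := hp.isTrail.edges_nodup
  rw [hedges] at hnd
  have hdisj := List.disjoint_of_nodup_append hnd
  have h1 : s(u,v) ∉ q.edges := fun h => hdisj h (by simp)
  have h3 : s(ub,vb) ∉ q.edges := fun h => hdisj h (by simp)
  have hnd2 := List.Nodup.of_append_right hnd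
  rw [List.nodup_cons] at hnd2
  have h2 : s(u,v) ∉ q2.edges := fun h => hnd2.1 (by simp [h])
  have h4 : s(ub,vb) ∉ q2.edges := fun h => (List.disjoint_of_nodup_append hnd2.2) h (by simp)
  -- reachability facts
  have hRcu : (T.deleteEdges {s(u,v)}).Reachable c u := reach_deleteEdges_of_walk q h1
  have hbra : ¬ (T.deleteEdges {s(u,v)}).Reachable u v := bridge_tree hT ha
  have hRcv : ¬ (T.deleteEdges {s(u,v)}).Reachable c v := fun h => hbra (hRcu.symm.trans h)
  have hRcuGb : (T.deleteEdges {s(ub,vb)}).Reachable c u := reach_deleteEdges_of_walk q h3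
  have hRcub : (T.deleteEdges {s(ub,vb)}).Reachable c ub := by
    apply reach_deleteEdges_of_walk (q.append (Walk.cons ha q2))
    rw [Walk.edges_append, Walk.edges_cons]
    intro hmem
    rcases List.mem_append.mp hmem with h | h
    · exact h3 h
    · rcases List.mem_cons.mp h with h | h
      · exact hne h.symm
      · exact h4 h
  have hbrb : ¬ (T.deleteEdges {s(ub,vb)}).Reachable ub vb := bridge_tree hT hb
  have hRcvb : ¬ (T.deleteEdges {s(ub,vb)}).Reachable c vb :=
    fun h => hbrb (hRcub.symm.trans h)
  have hRvvb : (T.deleteEdges {s(u,v)}).Reachable v vb := by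
    apply reach_deleteEdges_of_walk (q2.append (Walk.cons hb Walk.nil))
    rw [Walk.edges_append, Walk.edges_cons]
    intro hmem
    rcases List.mem_append.mp hmem with h | h
    · exact h2 h
    · rcases List.mem_cons.mp h with h | h
      · exact hne h
      · simp at h
  have hRcvGb : (T.deleteEdges {s(ub,vb)}).Reachable c v := by
    apply reach_deleteEdges_of_walk (q.append (Walk.cons ha Walk.nil))
    rw [Walk.edges_append, Walk.edges_cons]
    intro hmem
    rcases List.mem_append.mp hmem with h | h
    · exact h3 h
    · rcases List.mem_cons.mp h with h | h
      · exact hne h.symm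
      · simp at h
  -- the two sides
  set A' := ((T.deleteEdges {s(u,v)}).connectedComponentMk v).supp with hA'def
  set B' := ((T.deleteEdges {s(ub,vb)}).connectedComponentMk vb).supp with hB'def
  have hmemA' : ∀ y : V, y ∈ A' ↔ (T.deleteEdges {s(u,v)}).Reachable y v := by
    intro y
    rw [hA'def, ConnectedComponent.mem_supp_iff, ConnectedComponent.eq]
  have hmemB' : ∀ y : V, y ∈ B' ↔ (T.deleteEdges {s(ub,vb)}).Reachable y vb := by
    intro y
    rw [hB'def, ConnectedComponent.mem_supp_iff, ConnectedComponent.eq]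
  have hBA : B' ⊆ A' := by
    intro y hy
    rw [hmemB'] at hy
    obtain ⟨W, hW⟩ := walk_of_reach_deleteEdges hy.symm
    by_cases hu : u ∈ W.support
    · exfalso
      obtain ⟨W1, W2, hsplit⟩ := Walk.mem_support_iff_exists_append.mp hu
      have hW1 : s(ub,vb) ∉ W1.edges := fun hh => hW (by
        rw [hsplit, Walk.edges_append]; exact List.mem_append_left _ hh)
      exact hRcvb (hRcuGb.trans (reach_deleteEdges_of_walk W1 hW1).symm)
    · have hea : s(u,v) ∉ W.edges := fun hh => hu (Walk.fst_mem_support_of_mem_edges W hh)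
      rw [hmemA']
      exact (reach_deleteEdges_of_walk W hea).symm.trans hRvvb.symm
  have hvA : v ∈ A' := by rw [hmemA']
  have hvB : v ∉ B' := by
    rw [hmemB']
    exact fun h => hRcvb (hRcvGb.trans h)
  have hlt : B'.ncard < A'.ncard :=
    Set.ncard_lt_ncard ⟨hBA, fun h => hvB (h hvA)⟩ (Set.toFinite _)
  -- counting
  have hCD : (T.deleteEdges {s(u,v)}).connectedComponentMk u ≠
      (T.deleteEdges {s(u,v)}).connectedComponentMk v :=
    fun h => hbra (ConnectedComponent.exact h)
  have hsum : ((T.deleteEdges {s(u,v)}).connectedComponentMk u).supp.ncard + A'.ncard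
      = Fintype.card V := by
    apply supp_sum hCD
    intro y
    rcases reach_or hT ha y with h | h
    · exact Or.inl ((ConnectedComponent.mem_supp_iff _ _).mpr (ConnectedComponent.sound h))
    · exact Or.inr ((ConnectedComponent.mem_supp_iff _ _).mpr (ConnectedComponent.sound h))
  have hBmem : B'.ncard ∈ theta T {s(u,v)} := by
    rw [hth]
    exact mem_theta _
  obtain ⟨C, hC⟩ := theta_elem hBmem
  obtain ⟨z, hz⟩ := C.exists_rep
  rw [← hz] at hC
  have hBeq : B'.ncard = ((T.deleteEdges {s(u,v)}).connectedComponentMk u).supp.ncard := by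
    rcases reach_or hT ha z with h | h
    · rw [← hC]
      congr 1
      exact congrArg _ (ConnectedComponent.sound h)
    · exfalso
      have hzA : ConnectedComponent.supp (Quot.mk (T.deleteEdges {s(u, v)}).Reachable z) = A' :=
        congrArg ConnectedComponent.supp (ConnectedComponent.sound h)
      rw [hzA] at hC
      omega
  -- extract the neighbor w of c on the path
  have hwex : ∃ (w : V) (_ : T.Adj c w) (W : T.Walk w v), c ∉ W.support := by
    cases q with
    | nil =>
      exact ⟨v, ha, Walk.nil, by simpa using ha.ne⟩
    | @cons _ y _ h' q' =>
      refine ⟨y, h', q'.append (Walk.cons ha Walk.nil), ?_⟩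
      have hpnd := hp.support_nodup
      rw [Walk.cons_append, Walk.support_cons, List.nodup_cons] at hpnd
      intro hcsup
      apply hpnd.1
      rw [Walk.support_append] at hcsup ⊢
      rcases List.mem_append.mp hcsup with h | h
      · exact List.mem_append_left _ h
      · simp only [Walk.support_cons, Walk.support_nil, List.tail_cons, List.mem_singleton] at h
        subst h
        exact List.mem_append_right _ (by
          rw [Walk.support_cons, List.tail_cons]
          exact Walk.start_mem_support _)
  obtain ⟨w, hcw, Wv, hWv⟩ := hwex
  have hcwne : c ≠ w := hcw.ne
  have hwvert : w ∈ ((⊤ : T.Subgraph).deleteVerts {c}).verts := by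
    simp only [Subgraph.deleteVerts_verts, Subgraph.verts_top, Set.mem_diff,
      Set.mem_singleton_iff]
    exact ⟨trivial, fun h => hcwne h.symm⟩
  set K := ((⊤ : T.Subgraph).deleteVerts {c}).coe.connectedComponentMk ⟨w, hwvert⟩ with hKdef
  set S := Subtype.val '' K.supp with hSdef
  have hSmem : ∀ y : V, y ∈ S ↔ ∃ W : T.Walk w y, c ∉ W.support := by
    intro y
    constructor
    · rintro ⟨⟨y', hy'⟩, hy, rfl⟩
      rw [ConnectedComponent.mem_supp_iff, hKdef, ConnectedComponent.eq] at hy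
      obtain ⟨W, hW⟩ := walk_del _ _ hy.symm.some
      exact ⟨W, hW⟩
    · rintro ⟨W, hW⟩
      have hyv : y ∈ ((⊤ : T.Subgraph).deleteVerts {c}).verts := by
        simp only [Subgraph.deleteVerts_verts, Subgraph.verts_top, Set.mem_diff,
          Set.mem_singleton_iff]
        exact ⟨trivial, fun h => hW (h ▸ W.end_mem_support)⟩
      refine ⟨⟨y, hyv⟩, ?_, rfl⟩
      rw [ConnectedComponent.mem_supp_iff, hKdef, ConnectedComponent.eq]
      exact (reach_del W hW hwvert hyv).symm
  have hA'S : A' ⊆ S := by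
    intro y hy
    rw [hmemA'] at hy
    obtain ⟨W, hW⟩ := walk_of_reach_deleteEdges hy.symm
    have hcW : c ∉ W.support := by
      intro hcs
      obtain ⟨W1, W2, hsplit⟩ := Walk.mem_support_iff_exists_append.mp hcs
      have hW1 : s(u,v) ∉ W1.edges := fun hh => hW (by
        rw [hsplit, Walk.edges_append]; exact List.mem_append_left _ hh)
      exact hRcv (reach_deleteEdges_of_walk W1 hW1).symm
    rw [hSmem]
    refine ⟨Wv.append W, ?_⟩
    rw [Walk.support_append]
    intro hmem
    rcases List.mem_append.mp hmem with h | h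
    · exact hWv h
    · exact hcW (List.mem_of_mem_tail h)
  have ha'S : A'.ncard ≤ S.ncard := Set.ncard_le_ncard hA'S (Set.toFinite _)
  have hSK : S.ncard = K.supp.ncard := Set.ncard_image_of_injective _ Subtype.val_injective
  have hKw : K.supp.ncard ≤ weight T c := supp_ncard_le_weight K
  have hcvert : c ∈ ((⊤ : T.Subgraph).deleteVerts {w}).verts := by
    simp only [Subgraph.deleteVerts_verts, Subgraph.verts_top, Set.mem_diff,
      Set.mem_singleton_iff]
    exact ⟨trivial, hcwne⟩
  have hwS : w ∈ S := (hSmem w).mpr ⟨Walk.nil, by simpa using hcwne⟩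
  have hcompl : S.ncard + Sᶜ.ncard = Fintype.card V := by
    rw [Set.ncard_add_ncard_compl, Nat.card_eq_fintype_card]
  have hbound : ∀ C : ((⊤ : T.Subgraph).deleteVerts {w}).coe.ConnectedComponent,
      C.supp.ncard + 1 ≤ weight T c := by
    intro C
    by_cases hcC : (⟨c, hcvert⟩ : ((⊤ : T.Subgraph).deleteVerts {w}).verts) ∈ C.supp
    · have himg : Subtype.val '' C.supp ⊆ Sᶜ := by
        rintro _ ⟨⟨y, hyv⟩, hy, rfl⟩ hyS
        rw [ConnectedComponent.mem_supp_iff] at hy hcC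
        have hreach := ConnectedComponent.exact (hcC.trans hy.symm)
        obtain ⟨W1, hW1⟩ := walk_del _ _ hreach.some
        obtain ⟨W2, hW2⟩ := (hSmem y).mp hyS
        apply bridge_tree hT hcw
        apply reach_deleteEdges_of_walk (W1.append W2.reverse)
        rw [Walk.edges_append]
        intro hmem
        rcases List.mem_append.mp hmem with h | h
        · exact hW1 (Walk.snd_mem_support_of_mem_edges W1 h)
        · rw [Walk.edges_reverse, List.mem_reverse] at h
          exact hW2 (Walk.fst_mem_support_of_mem_edges W2 h)
      have h5 : C.supp.ncard ≤ Sᶜ.ncard := by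
        have := Set.ncard_le_ncard himg (Set.toFinite _)
        rwa [Set.ncard_image_of_injective _ Subtype.val_injective] at this
      omega
    · have himg : Subtype.val '' C.supp ⊆ S \ {w} := by
        rintro _ ⟨⟨y, hyv⟩, hy, rfl⟩
        have hyw : y ≠ w := by
          have := hyv
          simp only [Subgraph.deleteVerts_verts, Subgraph.verts_top, Set.mem_diff,
            Set.mem_singleton_iff] at this
          exact this.2
        refine ⟨?_, hyw⟩
        obtain ⟨P0⟩ := hT.1.preconnected c y
        obtain ⟨P, hPpath⟩ := P0.toPath
        by_cases hwP : w ∈ P.support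
        · obtain ⟨P1, P2, hsplit⟩ := Walk.mem_support_iff_exists_append.mp hwP
          have hcP2 : c ∉ P2.support := by
            have hnodup := hPpath.support_nodup
            rw [hsplit, Walk.support_append] at hnodup
            intro hc2
            rw [Walk.support_eq_cons P2] at hc2
            rcases List.mem_cons.mp hc2 with h | h
            · exact hcwne h
            · exact (List.disjoint_of_nodup_append hnodup) P1.start_mem_support h
          exact (hSmem y).mpr ⟨P2, hcP2⟩
        · exfalso
          apply hcC
          have hyv' : y ∈ ((⊤ : T.Subgraph).deleteVerts {w}).verts := hyv
          have hr := reach_del P hwP hcvert hyv'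
          rw [ConnectedComponent.mem_supp_iff] at hy ⊢
          rw [← hy]
          exact ConnectedComponent.sound hr
      have h5 : C.supp.ncard ≤ (S \ {w}).ncard := by
        have := Set.ncard_le_ncard himg (Set.toFinite _)
        rwa [Set.ncard_image_of_injective _ Subtype.val_injective] at this
      have h6 : (S \ {w}).ncard = S.ncard - 1 := Set.ncard_diff_singleton_of_mem hwS
      omega
  have hnonempty : Nonempty ((⊤ : T.Subgraph).deleteVerts {w}).coe.ConnectedComponent :=
    ⟨((⊤ : T.Subgraph).deleteVerts {w}).coe.connectedComponentMk ⟨c, hcvert⟩⟩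
  have hwlt : weight T w + 1 ≤ weight T c := by
    have h0 := hbound (((⊤ : T.Subgraph).deleteVerts {w}).coe.connectedComponentMk ⟨c, hcvert⟩)
    have h7 : weight T w ≤ weight T c - 1 := weight_le hnonempty (fun C => by
      have := hbound C; omega)
    omega
  have := hc w
  omega

end Aux

/-- If distinct edges of a tree have the same `θ_T`-image, then they repel. -/
theorem repel_of_theta_eq {V : Type*} [Fintype V] (T : SimpleGraph V) (hT : T.IsTree)
    (ea eb : Sym2 V) (hea : ea ∈ T.edgeSet) (heb : eb ∈ T.edgeSet) (hne : ea ≠ eb)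
    (h : theta T {ea} = theta T {eb}) : ¬ Attract T ea eb := by
  rintro ⟨c, x, p, hc, hp, heap, hebp⟩
  obtain ⟨u, v, q, hadj, r, heq, hpeq⟩ := exists_decomp p heap
  subst heq
  rw [hpeq] at hebp hp
  rw [Walk.edges_append, Walk.edges_cons] at hebp
  rcases List.mem_append.mp hebp with hq | hr
  · -- eb is in the earlier part q; swap roles
    obtain ⟨u', v', q', hadj', r', heq', hqeq⟩ := exists_decomp q hq
    subst heq'
    rw [hqeq] at hp
    rw [← Walk.append_assoc, Walk.cons_append] at hp
    exact key hT hc q' hadj' r' hadj r hp h.symm (Ne.symm hne)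
  · rcases List.mem_cons.mp hr with hr | hr
    · exact hne hr.symm
    · obtain ⟨u', v', q2, hadj', r2, heq', hreq⟩ := exists_decomp r hr
      subst heq'
      rw [hreq] at hp
      exact key hT hc q hadj q2 hadj' r2 hp h hne
end

section
/- A tree T with a single centroid is uniquely determined (up to isomorphism fixing the edge labels) by the data consisting of θ_T({e_i}) for every edge e_i and θ_T({e_i, e_k}) for every pair of distinct edges e_i, e_k: any two single-centroid trees on the same labeled edge set with identical such data are isomorphic via an isomorphism matching the edge labels. -/
open SimpleGraph

set_option linter.unusedSectionVars false
set_option maxHeartbeats 1000000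

namespace TDT

variable {V : Type*} [Fintype V] {T : SimpleGraph V}

lemma tree_bridge (ht : T.IsTree) {u v : V} (h : T.Adj u v) :
    ¬ (T.deleteEdges {s(u,v)}).Reachable u v :=
  ((isBridge_iff).mp (isAcyclic_iff_forall_adj_isBridge.mp ht.IsAcyclic h))

lemma reachable_delete_iff (ht : T.IsTree) {S : Set (Sym2 V)} {x y : V} :
    (T.deleteEdges S).Reachable x y ↔
      ∃ p : T.Walk x y, p.IsPath ∧ ∀ e ∈ p.edges, e ∉ S := by
  classical
  constructor
  · rintro ⟨q⟩
    have hq : ∀ e ∈ q.edges, e ∈ T.edgeSet := fun e he => by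
      have := q.edges_subset_edgeSet he
      rw [edgeSet_deleteEdges] at this; exact this.1
    have hq2 : ∀ e ∈ q.edges, e ∉ S := fun e he => by
      have := q.edges_subset_edgeSet he
      rw [edgeSet_deleteEdges] at this; exact this.2
    refine ⟨(q.transfer T hq).bypass, Walk.bypass_isPath _, fun e he => ?_⟩
    exact hq2 e (by simpa using (q.transfer T hq).edges_bypass_subset he)
  · rintro ⟨p, hp, he⟩
    exact ⟨p.toDeleteEdges S he⟩

lemma reachable_union (ht : T.IsTree) {S₁ S₂ : Set (Sym2 V)} {x y : V}
    (h1 : (T.deleteEdges S₁).Reachable x y) (h2 : (T.deleteEdges S₂).Reachable x y) :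
    (T.deleteEdges (S₁ ∪ S₂)).Reachable x y := by
  rw [reachable_delete_iff ht] at h1 h2 ⊢
  obtain ⟨p, hp, he1⟩ := h1
  obtain ⟨q, hq, he2⟩ := h2
  have hpq : p = q := (ht.existsUnique_path x y).unique hp hq
  subst hpq
  exact ⟨p, hp, fun e he => by
    rintro (h | h)
    exacts [he1 e he h, he2 e he h]⟩

lemma reachable_sub {S₁ S₂ : Set (Sym2 V)} {x y : V} (h : S₁ ⊆ S₂)
    (hr : (T.deleteEdges S₂).Reachable x y) : (T.deleteEdges S₁).Reachable x y :=
  hr.mono (deleteEdges_anti h)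

lemma reachable_split {S : Set (Sym2 V)} {x y : V}
    (h : (T.deleteEdges S).Reachable x y) (e : Sym2 V) :
    (T.deleteEdges (S ∪ {e})).Reachable x y ∨
      ∀ z ∈ e, (T.deleteEdges S).Reachable x z := by
  classical
  obtain ⟨p⟩ := h
  by_cases hmem : e ∈ p.edges
  · right
    intro z hz
    induction e with
    | _ a b =>
      rcases Sym2.mem_iff.mp hz with rfl | rfl
      · exact ⟨p.takeUntil z (p.fst_mem_support_of_mem_edges hmem)⟩
      · exact ⟨p.takeUntil z (p.snd_mem_support_of_mem_edges hmem)⟩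
  · left
    rw [← deleteEdges_deleteEdges]
    exact ⟨p.toDeleteEdges {e} (fun e' he' hee => by
      rw [Set.mem_singleton_iff] at hee; exact hmem (hee ▸ he'))⟩


/-- The reachability class of `x` in `T` minus the edges `S`. -/
def cl (T : SimpleGraph V) (S : Set (Sym2 V)) (x : V) : Set V :=
  {w | (T.deleteEdges S).Reachable x w}

lemma mem_cl {S : Set (Sym2 V)} {x w : V} :
    w ∈ cl T S x ↔ (T.deleteEdges S).Reachable x w := Iff.rfl

lemma mem_cl_self {S : Set (Sym2 V)} (x : V) : x ∈ cl T S x := Reachable.refl x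

lemma mem_cl_symm {S : Set (Sym2 V)} {x w : V} (h : w ∈ cl T S x) : x ∈ cl T S w :=
  Reachable.symm h

lemma mem_cl_trans {S : Set (Sym2 V)} {x w z : V} (h : w ∈ cl T S x) (h' : z ∈ cl T S w) :
    z ∈ cl T S x := Reachable.trans h h'

lemma cl_eq_cl {S : Set (Sym2 V)} {x w : V} (h : w ∈ cl T S x) : cl T S w = cl T S x := by
  ext z
  exact ⟨fun hz => mem_cl_trans h hz, fun hz => mem_cl_trans (mem_cl_symm h) hz⟩

lemma side_union (ht : T.IsTree) {u v : V} (h : T.Adj u v) (w : V) :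
    w ∈ cl T {s(u,v)} u ∪ cl T {s(u,v)} v := by
  obtain ⟨p⟩ := ht.isConnected.preconnected u w
  have key : ∀ {a b : V} (_ : T.Walk a b),
      a ∈ cl T {s(u,v)} u ∪ cl T {s(u,v)} v → b ∈ cl T {s(u,v)} u ∪ cl T {s(u,v)} v := by
    intro a b q
    induction q with
    | nil => exact id
    | @cons x y z hadj q ih =>
      intro hx
      apply ih
      by_cases he : s(x, y) = s(u, v)
      · rcases Sym2.eq_iff.mp he with ⟨rfl, rfl⟩ | ⟨rfl, rfl⟩
        · exact Or.inr (mem_cl_self _)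
        · exact Or.inl (mem_cl_self _)
      · have hadj' : (T.deleteEdges {s(u,v)}).Adj x y := by
          rw [deleteEdges_adj]
          exact ⟨hadj, by simpa using he⟩
        rcases hx with hx | hx
        · exact Or.inl (mem_cl_trans hx hadj'.reachable)
        · exact Or.inr (mem_cl_trans hx hadj'.reachable)
  exact key p (Or.inl (mem_cl_self _))

lemma side_disjoint (ht : T.IsTree) {u v : V} (h : T.Adj u v) :
    cl T {s(u,v)} u ∩ cl T {s(u,v)} v = ∅ := by
  ext w
  simp only [Set.mem_inter_iff, Set.mem_empty_iff_false, iff_false, not_and]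
  intro h1 h2
  exact tree_bridge ht h (h1.trans h2.symm)

lemma side_compl (ht : T.IsTree) {u v : V} (h : T.Adj u v) :
    cl T {s(u,v)} v = (cl T {s(u,v)} u)ᶜ := by
  ext w
  constructor
  · intro hw hw'
    have := side_disjoint ht h
    rw [Set.eq_empty_iff_forall_notMem] at this
    exact this w ⟨hw', hw⟩
  · intro hw
    rcases side_union ht h w with h1 | h1
    · exact absurd h1 hw
    · exact h1

lemma side_card (ht : T.IsTree) {u v : V} (h : T.Adj u v) :
    (cl T {s(u,v)} u).ncard + (cl T {s(u,v)} v).ncard = Fintype.card V := by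
  rw [side_compl ht h, Set.ncard_add_ncard_compl, Nat.card_eq_fintype_card]

lemma exists_nbr_side (ht : T.IsTree) {v w : V} (hw : w ≠ v) :
    ∃ y, T.Adj v y ∧ w ∈ cl T {s(v,y)} y := by
  obtain ⟨p, hp, -⟩ := ht.existsUnique_path v w
  cases p with
  | nil => exact absurd rfl hw
  | @cons _ y _ hadj q =>
    rw [Walk.cons_isPath_iff] at hp
    refine ⟨y, hadj, ⟨q.toDeleteEdges _ fun e he hee => ?_⟩⟩
    rw [Set.mem_singleton_iff] at hee
    subst hee
    exact hp.2 (q.fst_mem_support_of_mem_edges he)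

lemma nbr_side_unique (ht : T.IsTree) {v y y' w : V} (hy : T.Adj v y) (hy' : T.Adj v y')
    (hw : w ∈ cl T {s(v,y)} y) (hw' : w ∈ cl T {s(v,y')} y') : y = y' := by
  by_contra hne
  rcases reachable_split (mem_cl.mp hw') s(v,y) with h2 | h2
  · have h3 : (T.deleteEdges {s(v,y)}).Reachable y' w :=
      reachable_sub (by simp) h2
    have h4 : (T.deleteEdges {s(v,y)}).Reachable y y' := (mem_cl.mp hw).trans h3.symm
    have hedge : s(y', v) ≠ s(v, y) := by
      intro heq
      rcases Sym2.eq_iff.mp heq with ⟨-, h6⟩ | ⟨h5, -⟩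
      · exact hy.ne h6
      · exact hne h5.symm
    have hadj : (T.deleteEdges {s(v,y)}).Adj y' v := by
      rw [deleteEdges_adj]
      exact ⟨hy'.symm, by simpa using hedge⟩
    exact tree_bridge ht hy ((h4.trans hadj.reachable).symm)
  · exact tree_bridge ht hy' ((h2 v (by simp [Sym2.mem_iff])).symm)

lemma supp_mk {W : Type*} (G : SimpleGraph W) (x : W) :
    (G.connectedComponentMk x).supp = {w | G.Reachable x w} := by
  ext w
  rw [ConnectedComponent.mem_supp_iff, ConnectedComponent.eq, Set.mem_setOf_eq]
  exact reachable_comm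

lemma componentSizes_eq_pair {G : SimpleGraph V} {x y : V}
    (hxy : ¬ G.Reachable x y) (hcov : ∀ w, G.Reachable x w ∨ G.Reachable y w) :
    componentSizes G = {({w | G.Reachable x w}).ncard, ({w | G.Reachable y w}).ncard} := by
  classical
  have hxy' : G.connectedComponentMk x ≠ G.connectedComponentMk y := by
    rw [Ne, ConnectedComponent.eq]; exact hxy
  have huniv : ∀ (inst : Fintype G.ConnectedComponent),
      (@Finset.univ _ inst) =
        ({G.connectedComponentMk x, G.connectedComponentMk y} :
          Finset G.ConnectedComponent) := by
    intro inst
    apply Finset.ext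
    intro z
    simp only [Finset.mem_univ, true_iff, Finset.mem_insert, Finset.mem_singleton]
    induction z using ConnectedComponent.ind with
    | _ w =>
      rcases hcov w with hw | hw
      · exact Or.inl (ConnectedComponent.sound hw.symm)
      · exact Or.inr (ConnectedComponent.sound hw.symm)
  unfold componentSizes
  rw [huniv]
  rw [Finset.insert_val_of_notMem (by simpa using hxy'), Finset.singleton_val,
    Multiset.map_cons, Multiset.map_singleton, supp_mk, supp_mk]
  rfl

lemma componentSizes_eq_triple {G : SimpleGraph V} {x y z : V}
    (hxy : ¬ G.Reachable x y) (hxz : ¬ G.Reachable x z) (hyz : ¬ G.Reachable y z)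
    (hcov : ∀ w, G.Reachable x w ∨ G.Reachable y w ∨ G.Reachable z w) :
    componentSizes G = {({w | G.Reachable x w}).ncard, ({w | G.Reachable y w}).ncard,
      ({w | G.Reachable z w}).ncard} := by
  classical
  have hxy' : G.connectedComponentMk x ≠ G.connectedComponentMk y := by
    rw [Ne, ConnectedComponent.eq]; exact hxy
  have hxz' : G.connectedComponentMk x ≠ G.connectedComponentMk z := by
    rw [Ne, ConnectedComponent.eq]; exact hxz
  have hyz' : G.connectedComponentMk y ≠ G.connectedComponentMk z := by
    rw [Ne, ConnectedComponent.eq]; exact hyz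
  have huniv : ∀ (inst : Fintype G.ConnectedComponent),
      (@Finset.univ _ inst) =
        ({G.connectedComponentMk x, G.connectedComponentMk y, G.connectedComponentMk z} :
          Finset G.ConnectedComponent) := by
    intro inst
    apply Finset.ext
    intro c
    simp only [Finset.mem_univ, true_iff, Finset.mem_insert, Finset.mem_singleton]
    induction c using ConnectedComponent.ind with
    | _ w =>
      rcases hcov w with hw | hw | hw
      · exact Or.inl (ConnectedComponent.sound hw.symm)
      · exact Or.inr (Or.inl (ConnectedComponent.sound hw.symm))
      · exact Or.inr (Or.inr (ConnectedComponent.sound hw.symm))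
  unfold componentSizes
  rw [huniv]
  rw [Finset.insert_val_of_notMem (by simp [hxy', hxz']),
    Finset.insert_val_of_notMem (by simpa using hyz'), Finset.singleton_val,
    Multiset.map_cons, Multiset.map_cons, Multiset.map_singleton, supp_mk, supp_mk, supp_mk]
  rfl


/-- The set of vertices separated from `c` by the edge `e`. -/
def far (T : SimpleGraph V) (c : V) (e : Sym2 V) : Set V :=
  {w | ¬ (T.deleteEdges {e}).Reachable c w}

lemma mem_far {c : V} {e : Sym2 V} {w : V} :
    w ∈ far T c e ↔ ¬ (T.deleteEdges {e}).Reachable c w := Iff.rfl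

lemma not_mem_far_self {c : V} {e : Sym2 V} : c ∉ far T c e := fun h => h (Reachable.refl c)

lemma far_adj {c x y : V} {e : Sym2 V} (hxy : T.Adj x y) (hne : s(x,y) ≠ e) :
    x ∈ far T c e ↔ y ∈ far T c e := by
  have hadj : (T.deleteEdges {e}).Adj x y := by
    rw [deleteEdges_adj]
    exact ⟨hxy, by simpa using hne⟩
  simp only [mem_far]
  constructor
  · intro h hr; exact h (hr.trans hadj.reachable.symm)
  · intro h hr; exact h (hr.trans hadj.reachable)

lemma far_eq_cl_of (ht : T.IsTree) {a b c : V} (hadj : T.Adj a b)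
    (hca : (T.deleteEdges {s(a,b)}).Reachable c a) :
    far T c s(a,b) = cl T {s(a,b)} b := by
  ext w
  constructor
  · intro hw
    rcases side_union ht hadj w with h1 | h1
    · exact absurd (hca.trans (mem_cl.mp h1)) hw
    · exact h1
  · intro hw hcw
    exact tree_bridge ht hadj (hca.symm.trans (hcw.trans (mem_cl.mp hw).symm))

lemma edge_orientation (ht : T.IsTree) (c : V) {e : Sym2 V} (he : e ∈ T.edgeSet) :
    ∃ p : V × V, e = s(p.1, p.2) ∧ T.Adj p.1 p.2 ∧
      (T.deleteEdges {e}).Reachable c p.1 ∧ far T c e = cl T {e} p.2 := by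
  induction e with
  | _ u v =>
    have hadj : T.Adj u v := he
    rcases side_union ht hadj c with h | h
    · exact ⟨(u, v), rfl, hadj, (mem_cl.mp h).symm, far_eq_cl_of ht hadj (mem_cl.mp h).symm⟩
    · have hsw : s(u,v) = s(v,u) := Sym2.eq_swap
      refine ⟨(v, u), hsw, hadj.symm, ?_, ?_⟩
      · rw [hsw] at h ⊢
        exact (mem_cl.mp h).symm
      · rw [hsw]
        exact far_eq_cl_of ht hadj.symm (by rw [← hsw]; exact (mem_cl.mp h).symm)

lemma far_subset_far (ht : T.IsTree) {c : V} {e e' : Sym2 V} (hne : e ≠ e') {z : V}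
    (hz : z ∈ e) (hzf : z ∈ far T c e') : far T c e ⊆ far T c e' := by
  intro w hw
  rw [mem_far]
  intro hr
  rcases reachable_split hr e with h2 | h2
  · exact hw (reachable_sub (by simp) h2)
  · exact hzf (h2 z hz)

lemma theta_single_eq (ht : T.IsTree) (c : V) {e : Sym2 V} (he : e ∈ T.edgeSet) :
    theta T {e} = {((far T c e)ᶜ).ncard, (far T c e).ncard} := by
  obtain ⟨⟨a, b⟩, hee, hadj, hca, hfar⟩ := edge_orientation ht c he
  subst hee
  dsimp only at hadj hca hfar ⊢
  have hb : ¬ (T.deleteEdges {s(a,b)}).Reachable a b := tree_bridge ht hadj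
  have hres := componentSizes_eq_pair hb (fun w => by
    rcases side_union ht hadj w with h | h
    · exact Or.inl (mem_cl.mp h)
    · exact Or.inr (mem_cl.mp h))
  show componentSizes _ = _
  rw [hres]
  have h1 : {w | (T.deleteEdges {s(a,b)}).Reachable a w} = cl T {s(a,b)} a := rfl
  have h2 : {w | (T.deleteEdges {s(a,b)}).Reachable b w} = cl T {s(a,b)} b := rfl
  rw [h1, h2, ← hfar, hfar, side_compl ht hadj, compl_compl]

lemma far_ne_far (ht : T.IsTree) {c : V} {e e' : Sym2 V}
    (he' : e' ∈ T.edgeSet) (hne : e ≠ e') : far T c e ≠ far T c e' := by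
  obtain ⟨⟨a', b'⟩, hee', hadj', hca', hfar'⟩ := edge_orientation ht c he'
  dsimp only at *
  intro heq
  have hb' : b' ∈ far T c e' := by rw [hfar']; exact mem_cl_self b'
  have ha' : a' ∉ far T c e' := fun h => h hca'
  have hiff : a' ∈ far T c e ↔ b' ∈ far T c e := by
    refine far_adj hadj' ?_
    rw [← hee']
    exact hne.symm
  rw [← heq] at hb' ha'
  exact ha' (hiff.mpr hb')

lemma far_trichotomy (ht : T.IsTree) {c : V} {e e' : Sym2 V} (he : e ∈ T.edgeSet)
    (he' : e' ∈ T.edgeSet) (hne : e ≠ e') :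
    far T c e ⊆ far T c e' ∨ far T c e' ⊆ far T c e ∨ far T c e ∩ far T c e' = ∅ := by
  obtain ⟨⟨a, b⟩, hee, hadj, hca, hfar⟩ := edge_orientation ht c he
  obtain ⟨⟨a', b'⟩, hee', hadj', hca', hfar'⟩ := edge_orientation ht c he'
  dsimp only at *
  by_cases hb : b ∈ far T c e'
  · exact Or.inl (far_subset_far ht hne (by rw [hee]; exact Sym2.mem_mk_right _ _) hb)
  by_cases hb' : b' ∈ far T c e
  · exact Or.inr (Or.inl (far_subset_far ht hne.symm
      (by rw [hee']; exact Sym2.mem_mk_right _ _) hb'))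
  refine Or.inr (Or.inr ?_)
  ext w
  simp only [Set.mem_inter_iff, Set.mem_empty_iff_false, iff_false, not_and]
  intro hwe hwe'
  rw [hfar] at hwe
  have hbw : (T.deleteEdges {e}).Reachable b w := mem_cl.mp hwe
  rcases reachable_split hbw e' with h2 | h2
  · have h3 : (T.deleteEdges {e'}).Reachable b w := reachable_sub (by simp) h2
    have hcb : (T.deleteEdges {e'}).Reachable c b := not_not.mp hb
    exact hwe' (hcb.trans h3)
  · have hbb' : (T.deleteEdges {e}).Reachable b b' :=
      h2 b' (by rw [hee']; exact Sym2.mem_mk_right _ _)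
    apply hb'
    rw [hfar]
    exact mem_cl.mpr hbb'

lemma theta_pair_nested (ht : T.IsTree) {c : V} {e e' : Sym2 V} (he : e ∈ T.edgeSet)
    (he' : e' ∈ T.edgeSet) (hne : e ≠ e') (hsub : far T c e ⊆ far T c e') :
    theta T {e, e'} = {((far T c e')ᶜ).ncard, (far T c e' \ far T c e).ncard,
      (far T c e).ncard} := by
  obtain ⟨⟨a, b⟩, hee, hadj, hca, hfar⟩ := edge_orientation ht c he
  obtain ⟨⟨a', b'⟩, hee', hadj', hca', hfar'⟩ := edge_orientation ht c he'
  dsimp only at *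
  have hbFe : b ∈ far T c e := by rw [hfar]; exact mem_cl_self b
  have hb'Fe' : b' ∈ far T c e' := by rw [hfar']; exact mem_cl_self b'
  have hb'Fe : b' ∉ far T c e := by
    intro h
    exact far_ne_far ht he' hne (subset_antisymm hsub
      (far_subset_far ht hne.symm (by rw [hee']; exact Sym2.mem_mk_right _ _) h))
  have key : ∀ x y : V, (T.deleteEdges {e}).Reachable x y →
      (T.deleteEdges {e'}).Reachable x y → (T.deleteEdges {e, e'}).Reachable x y := by
    intro x y h1 h2
    rw [Set.insert_eq]
    exact reachable_union ht h1 h2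
  have proj : ∀ x y : V, (T.deleteEdges {e, e'}).Reachable x y →
      (T.deleteEdges {e}).Reachable x y := fun x y h => reachable_sub (by simp) h
  have proj' : ∀ x y : V, (T.deleteEdges {e, e'}).Reachable x y →
      (T.deleteEdges {e'}).Reachable x y := fun x y h => reachable_sub (by simp) h
  have hclc : {w | (T.deleteEdges {e, e'}).Reachable c w} = (far T c e')ᶜ := by
    ext w
    constructor
    · intro hw hw'
      exact hw' (proj' c w hw)
    · intro hw
      have h1 : (T.deleteEdges {e'}).Reachable c w := not_not.mp hw
      have h2 : (T.deleteEdges {e}).Reachable c w := by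
        by_contra hcon
        exact hw (hsub hcon)
      exact key c w h2 h1
  have hclb' : {w | (T.deleteEdges {e, e'}).Reachable b' w} = far T c e' \ far T c e := by
    ext w
    constructor
    · intro hw
      refine ⟨fun hcw => hb'Fe' (hcw.trans (proj' b' w hw).symm), ?_⟩
      have hcb' : (T.deleteEdges {e}).Reachable c b' := not_not.mp hb'Fe
      exact fun h => h (hcb'.trans (proj b' w hw))
    · intro hw
      have h1 : (T.deleteEdges {e'}).Reachable b' w := by
        have := hw.1
        rw [hfar'] at this
        exact mem_cl.mp this
      have h2 : (T.deleteEdges {e}).Reachable b' w :=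
        (not_not.mp hb'Fe).symm.trans (not_not.mp hw.2)
      exact key b' w h2 h1
  have hclb : {w | (T.deleteEdges {e, e'}).Reachable b w} = far T c e := by
    ext w
    constructor
    · intro hw hcw
      exact hbFe (hcw.trans (proj b w hw).symm)
    · intro hw
      have h1 : (T.deleteEdges {e}).Reachable b w := by
        rw [hfar] at hw
        exact mem_cl.mp hw
      have h2 : (T.deleteEdges {e'}).Reachable b w := by
        have hb2 := hsub hbFe
        have hw2 := hsub hw
        rw [hfar'] at hb2 hw2
        exact (mem_cl.mp hb2).symm.trans (mem_cl.mp hw2)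
      exact key b w h1 h2
  have hcb' : ¬ (T.deleteEdges {e, e'}).Reachable c b' := fun h => hb'Fe' (proj' c b' h)
  have hcb : ¬ (T.deleteEdges {e, e'}).Reachable c b := fun h => hbFe (proj c b h)
  have hb'b : ¬ (T.deleteEdges {e, e'}).Reachable b' b := by
    intro h
    apply hb'Fe
    rw [hfar]
    exact mem_cl.mpr (proj b' b h).symm
  have hcov : ∀ w, (T.deleteEdges {e, e'}).Reachable c w ∨
      (T.deleteEdges {e, e'}).Reachable b' w ∨ (T.deleteEdges {e, e'}).Reachable b w := by
    intro w
    by_cases h1 : w ∈ far T c e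
    · right; right
      rw [← hclb] at h1
      exact h1
    by_cases h2 : w ∈ far T c e'
    · right; left
      have : w ∈ far T c e' \ far T c e := ⟨h2, h1⟩
      rw [← hclb'] at this
      exact this
    · left
      have : w ∈ (far T c e')ᶜ := h2
      rw [← hclc] at this
      exact this
  show componentSizes _ = _
  rw [componentSizes_eq_triple hcb' hcb hb'b hcov, hclc, hclb', hclb]

lemma theta_pair_disjoint (ht : T.IsTree) {c : V} {e e' : Sym2 V} (he : e ∈ T.edgeSet)
    (he' : e' ∈ T.edgeSet) (hne : e ≠ e') (hd : far T c e ∩ far T c e' = ∅) :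
    theta T {e, e'} = {((far T c e ∪ far T c e')ᶜ).ncard, (far T c e').ncard,
      (far T c e).ncard} := by
  obtain ⟨⟨a, b⟩, hee, hadj, hca, hfar⟩ := edge_orientation ht c he
  obtain ⟨⟨a', b'⟩, hee', hadj', hca', hfar'⟩ := edge_orientation ht c he'
  dsimp only at *
  have hdis : ∀ {w : V}, w ∈ far T c e → w ∉ far T c e' := fun hw hw' =>
    Set.eq_empty_iff_forall_notMem.mp hd _ ⟨hw, hw'⟩
  have hbFe : b ∈ far T c e := by rw [hfar]; exact mem_cl_self b
  have hb'Fe' : b' ∈ far T c e' := by rw [hfar']; exact mem_cl_self b'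
  have hbFe' : b ∉ far T c e' := hdis hbFe
  have hb'Fe : b' ∉ far T c e := fun h => hdis h hb'Fe'
  have key : ∀ x y : V, (T.deleteEdges {e}).Reachable x y →
      (T.deleteEdges {e'}).Reachable x y → (T.deleteEdges {e, e'}).Reachable x y := by
    intro x y h1 h2
    rw [Set.insert_eq]
    exact reachable_union ht h1 h2
  have proj : ∀ x y : V, (T.deleteEdges {e, e'}).Reachable x y →
      (T.deleteEdges {e}).Reachable x y := fun x y h => reachable_sub (by simp) h
  have proj' : ∀ x y : V, (T.deleteEdges {e, e'}).Reachable x y →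
      (T.deleteEdges {e'}).Reachable x y := fun x y h => reachable_sub (by simp) h
  have hclc : {w | (T.deleteEdges {e, e'}).Reachable c w} = (far T c e ∪ far T c e')ᶜ := by
    ext w
    constructor
    · intro hw hmem
      rcases hmem with h | h
      · exact h (proj c w hw)
      · exact h (proj' c w hw)
    · intro hw
      exact key c w (not_not.mp fun h => hw (Or.inl h)) (not_not.mp fun h => hw (Or.inr h))
  have hclb' : {w | (T.deleteEdges {e, e'}).Reachable b' w} = far T c e' := by
    ext w
    constructor
    · intro hw hcw
      exact hb'Fe' (hcw.trans (proj' b' w hw).symm)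
    · intro hw
      have h1 : (T.deleteEdges {e'}).Reachable b' w := by
        rw [hfar'] at hw
        exact mem_cl.mp hw
      have h2 : (T.deleteEdges {e}).Reachable b' w :=
        (not_not.mp hb'Fe).symm.trans (not_not.mp (fun h => hdis h hw))
      exact key b' w h2 h1
  have hclb : {w | (T.deleteEdges {e, e'}).Reachable b w} = far T c e := by
    ext w
    constructor
    · intro hw hcw
      exact hbFe (hcw.trans (proj b w hw).symm)
    · intro hw
      have h1 : (T.deleteEdges {e}).Reachable b w := by
        rw [hfar] at hw
        exact mem_cl.mp hw
      have h2 : (T.deleteEdges {e'}).Reachable b w :=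
        (not_not.mp hbFe').symm.trans (not_not.mp (hdis hw))
      exact key b w h1 h2
  have hcb' : ¬ (T.deleteEdges {e, e'}).Reachable c b' := fun h => hb'Fe' (proj' c b' h)
  have hcb : ¬ (T.deleteEdges {e, e'}).Reachable c b := fun h => hbFe (proj c b h)
  have hb'b : ¬ (T.deleteEdges {e, e'}).Reachable b' b := by
    intro h
    apply hb'Fe
    rw [hfar]
    exact mem_cl.mpr (proj b' b h).symm
  have hcov : ∀ w, (T.deleteEdges {e, e'}).Reachable c w ∨
      (T.deleteEdges {e, e'}).Reachable b' w ∨ (T.deleteEdges {e, e'}).Reachable b w := by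
    intro w
    by_cases h1 : w ∈ far T c e
    · right; right
      rw [← hclb] at h1
      exact h1
    by_cases h2 : w ∈ far T c e'
    · right; left
      rw [← hclb'] at h2
      exact h2
    · left
      have : w ∈ (far T c e ∪ far T c e')ᶜ := fun h => h.elim h1 h2
      rw [← hclc] at this
      exact this
  show componentSizes _ = _
  rw [componentSizes_eq_triple hcb' hcb hb'b hcov, hclc, hclb', hclb]

lemma mem_support_of_mem_edge {G : SimpleGraph V} {x y u : V} (p : G.Walk x y) {e : Sym2 V}
    (he : e ∈ p.edges) (hue : u ∈ e) : u ∈ p.support := by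
  induction e with
  | _ z1 z2 =>
    rcases Sym2.mem_iff.mp hue with rfl | rfl
    · exact p.fst_mem_support_of_mem_edges he
    · exact p.snd_mem_support_of_mem_edges he

lemma cl_avoid_vertex (ht : T.IsTree) {x u : V} {S : Set (Sym2 V)}
    (hxu : ¬ (T.deleteEdges S).Reachable x u) {w : V}
    (hw : (T.deleteEdges S).Reachable x w) :
    (T.deleteEdges {e : Sym2 V | u ∈ e}).Reachable x w := by
  classical
  rw [reachable_delete_iff ht] at hw ⊢
  obtain ⟨p, hp, hpe⟩ := hw
  refine ⟨p, hp, fun e he hue => ?_⟩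
  have husupp : u ∈ p.support := mem_support_of_mem_edge p he hue
  exact hxu ⟨(p.takeUntil u husupp).toDeleteEdges _
    (fun e' he' => hpe e' (p.edges_takeUntil_subset husupp he'))⟩

lemma cl_mem_ne {u w : V} (hw : w ≠ u) {z : V}
    (hz : z ∈ cl T {e : Sym2 V | u ∈ e} w) : z ≠ u := by
  rintro rfl
  obtain ⟨p⟩ := (mem_cl.mp hz).symm
  obtain ⟨e, he, hue⟩ : ∃ e ∈ p.edges, z ∈ e := by
    cases p with
    | nil => exact absurd rfl hw
    | @cons _ m _ hadj q => exact ⟨s(z, m), by simp, Sym2.mem_mk_left _ _⟩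
  have hmem := p.edges_subset_edgeSet he
  rw [edgeSet_deleteEdges] at hmem
  exact hmem.2 hue

lemma walk_into_coe {u : V} {x y : V} (q : (T.deleteEdges {e : Sym2 V | u ∈ e}).Walk x y)
    (hx : x ∈ ((⊤ : T.Subgraph).deleteVerts {u}).verts)
    (hy : y ∈ ((⊤ : T.Subgraph).deleteVerts {u}).verts) :
    (((⊤ : T.Subgraph).deleteVerts {u}).coe).Reachable ⟨x, hx⟩ ⟨y, hy⟩ := by
  induction q with
  | nil => exact Reachable.refl _
  | @cons x z y hadj q ih =>
    rw [deleteEdges_adj] at hadj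
    have hz : z ≠ u := by
      rintro rfl
      exact hadj.2 (Sym2.mem_mk_right _ _)
    have hzmem : z ∈ ((⊤ : T.Subgraph).deleteVerts {u}).verts :=
      ⟨Set.mem_univ z, by simpa using hz⟩
    have hadj' : (((⊤ : T.Subgraph).deleteVerts {u}).coe).Adj ⟨x, hx⟩ ⟨z, hzmem⟩ := by
      show ((⊤ : T.Subgraph).deleteVerts {u}).Adj x z
      rw [Subgraph.deleteVerts_adj]
      exact ⟨Set.mem_univ x, by simpa using hx.2, Set.mem_univ z, by simpa using hz, hadj.1⟩
    exact hadj'.reachable.trans (ih hzmem hy)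

lemma reach_coe_iff {u : V} (z z' : ↑((⊤ : T.Subgraph).deleteVerts {u}).verts) :
    (((⊤ : T.Subgraph).deleteVerts {u}).coe).Reachable z z' ↔
      (T.deleteEdges {e : Sym2 V | u ∈ e}).Reachable z.val z'.val := by
  constructor
  · rintro ⟨p⟩
    refine ⟨(p.map ((⊤ : T.Subgraph).deleteVerts {u}).hom).toDeleteEdges _
      fun e he hue => ?_⟩
    have husupp : u ∈ (p.map ((⊤ : T.Subgraph).deleteVerts {u}).hom).support :=
      mem_support_of_mem_edge _ he hue
    rw [Walk.support_map] at husupp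
    obtain ⟨t, -, htv⟩ := List.mem_map.mp husupp
    have : t.val ≠ u := by simpa using t.2.2
    exact this htv
  · rintro ⟨q⟩
    exact walk_into_coe q z.2 z'.2

lemma supp_ncard_eq {u : V} (z : ↑((⊤ : T.Subgraph).deleteVerts {u}).verts) :
    ((((⊤ : T.Subgraph).deleteVerts {u}).coe).connectedComponentMk z).supp.ncard
      = (cl T {e : Sym2 V | u ∈ e} z.val).ncard := by
  rw [supp_mk]
  have himg : Subtype.val '' {w | (((⊤ : T.Subgraph).deleteVerts {u}).coe).Reachable z w}
      = cl T {e : Sym2 V | u ∈ e} z.val := by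
    ext y
    simp only [Set.mem_image, Set.mem_setOf_eq]
    constructor
    · rintro ⟨t, hres, rfl⟩
      exact (reach_coe_iff z t).mp hres
    · intro hy
      have hyne : y ≠ u := cl_mem_ne (by simpa using z.2.2) hy
      exact ⟨⟨y, ⟨Set.mem_univ y, by simpa using hyne⟩⟩, (reach_coe_iff z _).mpr hy, rfl⟩
  rw [← himg, Set.ncard_image_of_injective _ Subtype.val_injective]

lemma weight_ge {u : V} (z : ↑((⊤ : T.Subgraph).deleteVerts {u}).verts) :
    (cl T {e : Sym2 V | u ∈ e} z.val).ncard ≤ weight T u := by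
  rw [← supp_ncard_eq z]
  unfold weight
  exact le_csSup (Set.Finite.bddAbove (Set.finite_range _)) ⟨_, rfl⟩

lemma weight_le {u : V} {m : ℕ} (hne : ∃ w : V, w ≠ u)
    (h : ∀ w : V, w ≠ u → (cl T {e : Sym2 V | u ∈ e} w).ncard ≤ m) : weight T u ≤ m := by
  unfold weight
  apply csSup_le
  · obtain ⟨w, hw⟩ := hne
    exact ⟨_, ⟨(((⊤ : T.Subgraph).deleteVerts {u}).coe).connectedComponentMk
      ⟨w, ⟨Set.mem_univ w, by simpa using hw⟩⟩, rfl⟩⟩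
  · rintro x ⟨comp, rfl⟩
    induction comp using ConnectedComponent.ind with
    | _ z =>
      dsimp only
      rw [supp_ncard_eq z]
      exact h z.val (by simpa using z.2.2)

lemma cl_inc_subset_side {u y w : V} (hwy : w ∈ cl T {s(u,y)} y) :
    cl T {e : Sym2 V | u ∈ e} w ⊆ cl T {s(u,y)} y := by
  intro z hz
  have hz' : (T.deleteEdges {s(u,y)}).Reachable w z :=
    reachable_sub (by simp) (mem_cl.mp hz)
  exact mem_cl_trans hwy (mem_cl.mpr hz')

lemma cl_inc_eq_side (ht : T.IsTree) {u y : V} (hy : T.Adj u y) :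
    cl T {e : Sym2 V | u ∈ e} y = cl T {s(u,y)} y := by
  apply subset_antisymm (cl_inc_subset_side (mem_cl_self y))
  intro w hw
  exact mem_cl.mpr (cl_avoid_vertex ht
    (fun hr => tree_bridge ht hy hr.symm) (mem_cl.mp hw))

lemma far_small (ht : T.IsTree) {c : V} (hc : centroid T = {c}) {e : Sym2 V}
    (he : e ∈ T.edgeSet) : 2 * (far T c e).ncard < Fintype.card V := by
  by_contra hbig
  push_neg at hbig
  obtain ⟨⟨a, b⟩, hee, hadj, hca, hfar⟩ := edge_orientation ht c he
  dsimp only at *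
  have hbF : b ∈ far T c e := by rw [hfar]; exact mem_cl_self b
  have hbc : b ≠ c := fun h => not_mem_far_self (h ▸ hbF)
  obtain ⟨v, hcv, hbX⟩ := exists_nbr_side ht hbc
  have hvc : v ≠ c := hcv.ne'
  have hfarX : far T c e ⊆ cl T {s(c,v)} v := by
    intro w hw
    have hw' : (T.deleteEdges {e}).Reachable b w := by
      rw [hfar] at hw; exact mem_cl.mp hw
    have hbc' : ¬ (T.deleteEdges {e}).Reachable b c := fun hr => hbF hr.symm
    have hbw : (T.deleteEdges {e' : Sym2 V | c ∈ e'}).Reachable b w :=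
      cl_avoid_vertex ht hbc' hw'
    exact mem_cl_trans hbX (mem_cl.mpr (reachable_sub (by simp) hbw))
  have hXcard : Fintype.card V ≤ 2 * (cl T {s(c,v)} v).ncard := by
    have h1 := Set.ncard_le_ncard hfarX (Set.toFinite _)
    omega
  have hwc : (cl T {s(c,v)} v).ncard ≤ weight T c := by
    have h2 := weight_ge (T := T) (u := c) ⟨v, ⟨Set.mem_univ v, by simpa using hvc⟩⟩
    rwa [cl_inc_eq_side ht hcv] at h2
  have hwv : weight T v ≤
      max (Fintype.card V - (cl T {s(c,v)} v).ncard) ((cl T {s(c,v)} v).ncard - 1) := by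
    apply weight_le ⟨c, hvc.symm⟩
    intro w hwv'
    obtain ⟨y, hvy, hwy⟩ := exists_nbr_side ht hwv'
    have hcard2 : (cl T {e' : Sym2 V | v ∈ e'} w).ncard ≤ (cl T {s(v,y)} y).ncard :=
      Set.ncard_le_ncard (cl_inc_subset_side hwy) (Set.toFinite _)
    by_cases hyc : y = c
    · rw [hyc] at hcard2
      have hsum := side_card ht hcv
      have hswap : cl T {s(v,c)} c = cl T {s(c,v)} c := by rw [Sym2.eq_swap]
      rw [hswap] at hcard2
      have : (cl T {s(c,v)} c).ncard = Fintype.card V - (cl T {s(c,v)} v).ncard := by omega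
      rw [this] at hcard2
      exact le_trans hcard2 (le_max_left _ _)
    · have hyX : y ∈ cl T {s(c,v)} v := by
        apply mem_cl.mpr
        apply Adj.reachable
        rw [deleteEdges_adj]
        refine ⟨hvy, ?_⟩
        intro heq
        rw [Set.mem_singleton_iff] at heq
        rcases Sym2.eq_iff.mp heq with ⟨h1, -⟩ | ⟨-, h2⟩
        · exact hvc h1
        · exact hyc h2
      have hclsub : cl T {s(v,y)} y ⊆ cl T {s(c,v)} v \ {v} := by
        intro z hzy
        have hcny : ¬ (T.deleteEdges {s(v,y)}).Reachable y c := by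
          intro hr
          exact hyc (nbr_side_unique ht hvy hcv.symm (mem_cl.mpr hr) (mem_cl_self c))
        constructor
        · have hz2 : (T.deleteEdges {e' : Sym2 V | c ∈ e'}).Reachable y z :=
            cl_avoid_vertex ht hcny (mem_cl.mp hzy)
          exact mem_cl_trans hyX (mem_cl.mpr (reachable_sub (by simp) hz2))
        · intro hzv
          rw [Set.mem_singleton_iff] at hzv
          subst hzv
          exact tree_bridge ht hvy ((mem_cl.mp hzy).symm)
      have hycard : (cl T {s(v,y)} y).ncard ≤ (cl T {s(c,v)} v).ncard - 1 := by
        have h3 := Set.ncard_le_ncard hclsub (Set.toFinite _)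
        rw [Set.ncard_diff_singleton_of_mem (mem_cl_self v)] at h3
        exact h3
      exact le_trans (le_trans hcard2 hycard) (le_max_right _ _)
  have hcc : ∀ u, weight T c ≤ weight T u := by
    have hmem : c ∈ centroid T := by rw [hc]; exact Set.mem_singleton c
    exact hmem
  have h1 : weight T v ≤ weight T c := by
    refine le_trans hwv (max_le ?_ ?_) <;> omega
  have hvcent : v ∈ centroid T := fun u => le_trans h1 (hcc u)
  rw [hc] at hvcent
  exact hvc (Set.mem_singleton_iff.mp hvcent)

lemma not_all_endpoints_far (ht : T.IsTree) (c : V) {e : Sym2 V} (he : e ∈ T.edgeSet) :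
    ¬ ∀ z ∈ e, z ∈ far T c e := by
  obtain ⟨⟨a, b⟩, hee, hadj, hca, hfar⟩ := edge_orientation ht c he
  dsimp only at *
  intro h
  exact (h a (by rw [hee]; exact Sym2.mem_mk_left _ _)) hca

lemma endpoint_in_far_eq (ht : T.IsTree) {c : V} {e : Sym2 V} (he : e ∈ T.edgeSet)
    {x y : V} (hx : x ∈ e) (hxf : x ∈ far T c e) (hy : y ∈ e) (hyf : y ∈ far T c e) :
    x = y := by
  induction e with
  | _ p q =>
    rcases Sym2.mem_iff.mp hx with rfl | rfl <;> rcases Sym2.mem_iff.mp hy with rfl | rfl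
    · rfl
    · exact absurd (fun z hz => by
        rcases Sym2.mem_iff.mp hz with rfl | rfl
        exacts [hxf, hyf]) (not_all_endpoints_far ht c he)
    · exact absurd (fun z hz => by
        rcases Sym2.mem_iff.mp hz with rfl | rfl
        exacts [hyf, hxf]) (not_all_endpoints_far ht c he)
    · rfl

lemma far_both (ht : T.IsTree) {c z : V} {e e' : Sym2 V} (he' : e' ∈ T.edgeSet)
    (hne : e ≠ e') (hz : z ∈ e') (hzf' : z ∈ far T c e') (hzsub : z ∈ far T c e)
    (hsub : far T c e ⊆ far T c e') : False := by
  induction e' with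
  | _ p q =>
    have hadj : T.Adj p q := he'
    apply not_all_endpoints_far ht c he'
    intro w hw
    rcases Sym2.mem_iff.mp hz with rfl | rfl <;> rcases Sym2.mem_iff.mp hw with rfl | rfl
    · exact hzf'
    · exact hsub ((far_adj hadj hne.symm).mp hzsub)
    · exact hsub ((far_adj hadj hne.symm).mpr hzsub)
    · exact hzf'

end TDT

open TDT

/-- A single-centroid tree is determined, up to a label-matching isomorphism, by the
`θ`-data of its singleton and 2-element edge sets: if two single-centroid trees with
edges labeled by the same index type `ι` have identical such data, then they are
isomorphic via an isomorphism matching the edge labels. -/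
theorem tree_determined_by_theta_data {V₁ V₂ ι : Type*} [Fintype V₁] [Fintype V₂]
    (T₁ : SimpleGraph V₁) (T₂ : SimpleGraph V₂) (h₁ : T₁.IsTree) (h₂ : T₂.IsTree)
    (c₁ : V₁) (c₂ : V₂) (hc₁ : centroid T₁ = {c₁}) (hc₂ : centroid T₂ = {c₂})
    (f : ι ≃ T₁.edgeSet) (g : ι ≃ T₂.edgeSet)
    (hsingle : ∀ i : ι, theta T₁ {(f i : Sym2 V₁)} = theta T₂ {(g i : Sym2 V₂)})
    (hpair : ∀ i j : ι, i ≠ j →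
      theta T₁ {(f i : Sym2 V₁), (f j : Sym2 V₁)} =
        theta T₂ {(g i : Sym2 V₂), (g j : Sym2 V₂)}) :
    ∃ φ : T₁ ≃g T₂, ∀ i : ι, Sym2.map φ (f i : Sym2 V₁) = (g i : Sym2 V₂) := by
  classical
  haveI : Fintype T₁.edgeSet := Fintype.ofFinite _
  haveI : Fintype T₂.edgeSet := Fintype.ofFinite _
  have hnV : Fintype.card V₂ = Fintype.card V₁ := by
    have hE : Fintype.card T₁.edgeSet = Fintype.card T₂.edgeSet :=
      Fintype.card_congr (f.symm.trans g)
    have h1' := h₁.card_edgeFinset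
    have h2' := h₂.card_edgeFinset
    rw [edgeFinset_card] at h1' h2'
    omega
  choose P₁ hee₁ hadj₁ hca₁ hfar₁ using fun i : ι => edge_orientation h₁ c₁ (f i).2
  choose P₂ hee₂ hadj₂ hca₂ hfar₂ using fun i : ι => edge_orientation h₂ c₂ (g i).2
  have hbF₁ : ∀ i, (P₁ i).2 ∈ far T₁ c₁ ↑(f i) := fun i => by
    rw [hfar₁ i]; exact mem_cl_self _
  have hbF₂ : ∀ i, (P₂ i).2 ∈ far T₂ c₂ ↑(g i) := fun i => by
    rw [hfar₂ i]; exact mem_cl_self _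
  have haF₁ : ∀ i, (P₁ i).1 ∉ far T₁ c₁ ↑(f i) := fun i h => h (hca₁ i)
  have haF₂ : ∀ i, (P₂ i).1 ∉ far T₂ c₂ ↑(g i) := fun i h => h (hca₂ i)
  have hbe₁ : ∀ i, (P₁ i).2 ∈ (f i : Sym2 V₁) := fun i => by
    rw [hee₁ i]; exact Sym2.mem_mk_right _ _
  have hbe₂ : ∀ i, (P₂ i).2 ∈ (g i : Sym2 V₂) := fun i => by
    rw [hee₂ i]; exact Sym2.mem_mk_right _ _
  have hae₁ : ∀ i, (P₁ i).1 ∈ (f i : Sym2 V₁) := fun i => by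
    rw [hee₁ i]; exact Sym2.mem_mk_left _ _
  have hae₂ : ∀ i, (P₂ i).1 ∈ (g i : Sym2 V₂) := fun i => by
    rw [hee₂ i]; exact Sym2.mem_mk_left _ _
  have hfne₁ : ∀ {i j : ι}, i ≠ j → (f i : Sym2 V₁) ≠ (f j : Sym2 V₁) :=
    fun hij heq => hij (f.injective (Subtype.ext heq))
  have hfne₂ : ∀ {i j : ι}, i ≠ j → (g i : Sym2 V₂) ≠ (g j : Sym2 V₂) :=
    fun hij heq => hij (g.injective (Subtype.ext heq))
  have hFne₁ : ∀ {i j : ι}, i ≠ j → far T₁ c₁ ↑(f i) ≠ far T₁ c₁ ↑(f j) :=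
    fun hij => far_ne_far h₁ (f _).2 (hfne₁ hij)
  have hFne₂ : ∀ {i j : ι}, i ≠ j → far T₂ c₂ ↑(g i) ≠ far T₂ c₂ ↑(g j) :=
    fun hij => far_ne_far h₂ (g _).2 (hfne₂ hij)
  have hpos₁ : ∀ i, 0 < (far T₁ c₁ ↑(f i)).ncard :=
    fun i => (Set.ncard_pos (Set.toFinite _)).mpr ⟨_, hbF₁ i⟩
  have hpos₂ : ∀ i, 0 < (far T₂ c₂ ↑(g i)).ncard :=
    fun i => (Set.ncard_pos (Set.toFinite _)).mpr ⟨_, hbF₂ i⟩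
  have hsmall₁ : ∀ i, 2 * (far T₁ c₁ ↑(f i)).ncard < Fintype.card V₁ :=
    fun i => far_small h₁ hc₁ (f i).2
  have hsmall₂ : ∀ i, 2 * (far T₂ c₂ ↑(g i)).ncard < Fintype.card V₂ :=
    fun i => far_small h₂ hc₂ (g i).2
  have hcompl₁ : ∀ i, (far T₁ c₁ ↑(f i)).ncard + ((far T₁ c₁ ↑(f i))ᶜ).ncard
      = Fintype.card V₁ := fun i => by
    rw [Set.ncard_add_ncard_compl, Nat.card_eq_fintype_card]
  have hcompl₂ : ∀ i, (far T₂ c₂ ↑(g i)).ncard + ((far T₂ c₂ ↑(g i))ᶜ).ncard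
      = Fintype.card V₂ := fun i => by
    rw [Set.ncard_add_ncard_compl, Nat.card_eq_fintype_card]
  have hsz : ∀ i, (far T₂ c₂ ↑(g i)).ncard = (far T₁ c₁ ↑(f i)).ncard := by
    intro i
    have hs := hsingle i
    rw [theta_single_eq h₁ c₁ (f i).2, theta_single_eq h₂ c₂ (g i).2] at hs
    have hmem : (far T₂ c₂ ↑(g i)).ncard ∈
        ({((far T₁ c₁ ↑(f i))ᶜ).ncard, (far T₁ c₁ ↑(f i)).ncard} : Multiset ℕ) := by
      rw [hs]; simp
    simp only [Multiset.insert_eq_cons, Multiset.mem_cons, Multiset.mem_singleton] at hmem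
    have e1 := hsmall₁ i
    have e2 := hsmall₂ i
    have e3 := hcompl₁ i
    rcases hmem with h | h
    · omega
    · exact h
  -- matching of strict inclusions
  have hssub : ∀ i j : ι, (far T₁ c₁ ↑(f i) ⊂ far T₁ c₁ ↑(f j)) ↔
      (far T₂ c₂ ↑(g i) ⊂ far T₂ c₂ ↑(g j)) := by
    intro i j
    rcases eq_or_ne i j with rfl | hij
    · exact iff_of_false (ssubset_irrefl _) (ssubset_irrefl _)
    have key : ∀ i' j' : ι, i' ≠ j' → far T₁ c₁ ↑(f i') ⊆ far T₁ c₁ ↑(f j') →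
        far T₂ c₂ ↑(g i') ⊆ far T₂ c₂ ↑(g j') := by
      intro i j hij hAB
      have hab : (far T₁ c₁ ↑(f i)).ncard < (far T₁ c₁ ↑(f j)).ncard :=
        Set.ncard_lt_ncard (ssubset_of_subset_of_ne hAB (hFne₁ hij)) (Set.toFinite _)
      have h2 := hpair i j hij
      rw [theta_pair_nested h₁ (f i).2 (f j).2 (hfne₁ hij) hAB] at h2
      rcases far_trichotomy h₂ (g i).2 (g j).2 (hfne₂ hij) with hCD | hDC | hdisj
      · exact hCD
      · exfalso
        have hba : (far T₂ c₂ ↑(g j)).ncard < (far T₂ c₂ ↑(g i)).ncard :=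
          Set.ncard_lt_ncard (ssubset_of_subset_of_ne hDC (hFne₂ hij).symm) (Set.toFinite _)
        have := hsz i; have := hsz j
        omega
      · exfalso
        rw [theta_pair_disjoint h₂ (g i).2 (g j).2 (hfne₂ hij) hdisj] at h2
        have hmem : (far T₂ c₂ ↑(g j)).ncard ∈
            ({((far T₁ c₁ ↑(f j))ᶜ).ncard,
              (far T₁ c₁ ↑(f j) \ far T₁ c₁ ↑(f i)).ncard,
              (far T₁ c₁ ↑(f i)).ncard} : Multiset ℕ) := by
          rw [h2]; simp
        have hdiff : (far T₁ c₁ ↑(f j) \ far T₁ c₁ ↑(f i)).ncard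
            = (far T₁ c₁ ↑(f j)).ncard - (far T₁ c₁ ↑(f i)).ncard :=
          Set.ncard_diff hAB (Set.toFinite _)
        simp only [Multiset.insert_eq_cons, Multiset.mem_cons, Multiset.mem_singleton] at hmem
        have e1 := hsmall₁ j
        have e2 := hcompl₁ j
        have e3 := hpos₁ i
        have e4 := hsz i
        have e5 := hsz j
        rcases hmem with h | h | h <;> omega
    have key2 : ∀ i' j' : ι, i' ≠ j' → far T₂ c₂ ↑(g i') ⊆ far T₂ c₂ ↑(g j') →
        far T₁ c₁ ↑(f i') ⊆ far T₁ c₁ ↑(f j') := by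
      intro i j hij hCD
      have hcd : (far T₂ c₂ ↑(g i)).ncard < (far T₂ c₂ ↑(g j)).ncard :=
        Set.ncard_lt_ncard (ssubset_of_subset_of_ne hCD (hFne₂ hij)) (Set.toFinite _)
      have h2 := hpair i j hij
      rw [theta_pair_nested h₂ (g i).2 (g j).2 (hfne₂ hij) hCD] at h2
      rcases far_trichotomy h₁ (f i).2 (f j).2 (hfne₁ hij) with hAB | hBA | hdisj
      · exact hAB
      · exfalso
        have hba : (far T₁ c₁ ↑(f j)).ncard < (far T₁ c₁ ↑(f i)).ncard :=
          Set.ncard_lt_ncard (ssubset_of_subset_of_ne hBA (hFne₁ hij).symm) (Set.toFinite _)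
        have := hsz i; have := hsz j
        omega
      · exfalso
        rw [theta_pair_disjoint h₁ (f i).2 (f j).2 (hfne₁ hij) hdisj] at h2
        have hmem : (far T₁ c₁ ↑(f j)).ncard ∈
            ({((far T₂ c₂ ↑(g j))ᶜ).ncard,
              (far T₂ c₂ ↑(g j) \ far T₂ c₂ ↑(g i)).ncard,
              (far T₂ c₂ ↑(g i)).ncard} : Multiset ℕ) := by
          rw [← h2]; simp
        have hdiff : (far T₂ c₂ ↑(g j) \ far T₂ c₂ ↑(g i)).ncard
            = (far T₂ c₂ ↑(g j)).ncard - (far T₂ c₂ ↑(g i)).ncard :=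
          Set.ncard_diff hCD (Set.toFinite _)
        simp only [Multiset.insert_eq_cons, Multiset.mem_cons, Multiset.mem_singleton] at hmem
        have e1 := hsmall₂ j
        have e2 := hcompl₂ j
        have e3 := hpos₂ i
        have e4 := hsz i
        have e5 := hsz j
        rcases hmem with h | h | h <;> omega
    rw [Set.ssubset_iff_subset_ne, Set.ssubset_iff_subset_ne]
    constructor
    · rintro ⟨hs, -⟩
      exact ⟨key i j hij hs, hFne₂ hij⟩
    · rintro ⟨hs, -⟩
      exact ⟨key2 i j hij hs, hFne₁ hij⟩
  -- endpoint functions are injective and surjective onto non-centroid vertices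
  have hbc₁ : ∀ i, (P₁ i).2 ≠ c₁ := fun i h => not_mem_far_self (h ▸ hbF₁ i)
  have hbc₂ : ∀ i, (P₂ i).2 ≠ c₂ := fun i h => not_mem_far_self (h ▸ hbF₂ i)
  have hbinj₁ : Function.Injective (fun i => (P₁ i).2) := by
    intro i j hbij
    by_contra hij
    dsimp only at hbij
    rcases far_trichotomy h₁ (f i).2 (f j).2 (hfne₁ hij) with hAB | hBA | hdisj
    · refine far_both h₁ (f j).2 (hfne₁ hij) ?_ ?_ (hbF₁ i) hAB
      · rw [hbij]; exact hbe₁ j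
      · rw [hbij]; exact hbF₁ j
    · refine far_both h₁ (f i).2 (hfne₁ (Ne.symm hij)) ?_ ?_ (hbF₁ j) hBA
      · rw [← hbij]; exact hbe₁ i
      · rw [← hbij]; exact hbF₁ i
    · exact Set.eq_empty_iff_forall_notMem.mp hdisj (P₁ i).2
        ⟨hbF₁ i, by rw [hbij]; exact hbF₁ j⟩
  have hbinj₂ : Function.Injective (fun i => (P₂ i).2) := by
    intro i j hbij
    by_contra hij
    dsimp only at hbij
    rcases far_trichotomy h₂ (g i).2 (g j).2 (hfne₂ hij) with hAB | hBA | hdisj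
    · refine far_both h₂ (g j).2 (hfne₂ hij) ?_ ?_ (hbF₂ i) hAB
      · rw [hbij]; exact hbe₂ j
      · rw [hbij]; exact hbF₂ j
    · refine far_both h₂ (g i).2 (hfne₂ (Ne.symm hij)) ?_ ?_ (hbF₂ j) hBA
      · rw [← hbij]; exact hbe₂ i
      · rw [← hbij]; exact hbF₂ i
    · exact Set.eq_empty_iff_forall_notMem.mp hdisj (P₂ i).2
        ⟨hbF₂ i, by rw [hbij]; exact hbF₂ j⟩
  have hbsurj₁ : ∀ w : V₁, w ≠ c₁ → ∃ i, (P₁ i).2 = w := by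
    intro w hw
    obtain ⟨y, hwy, hcy⟩ := exists_nbr_side h₁ (Ne.symm hw)
    have hE : s(w, y) ∈ T₁.edgeSet := hwy
    have hfi : (f (f.symm ⟨s(w,y), hE⟩) : Sym2 V₁) = s(w, y) := by
      rw [Equiv.apply_symm_apply]
    refine ⟨f.symm ⟨s(w,y), hE⟩, ?_⟩
    have hwfar : w ∈ far T₁ c₁ ↑(f (f.symm ⟨s(w,y), hE⟩)) := by
      rw [hfi, mem_far]
      intro hr
      exact tree_bridge h₁ hwy ((mem_cl.mp hcy).trans hr).symm
    exact endpoint_in_far_eq h₁ (f _).2 (hbe₁ _) (hbF₁ _)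
      (by rw [hfi]; exact Sym2.mem_mk_left _ _) hwfar
  have hbsurj₂ : ∀ w : V₂, w ≠ c₂ → ∃ i, (P₂ i).2 = w := by
    intro w hw
    obtain ⟨y, hwy, hcy⟩ := exists_nbr_side h₂ (Ne.symm hw)
    have hE : s(w, y) ∈ T₂.edgeSet := hwy
    have hfi : (g (g.symm ⟨s(w,y), hE⟩) : Sym2 V₂) = s(w, y) := by
      rw [Equiv.apply_symm_apply]
    refine ⟨g.symm ⟨s(w,y), hE⟩, ?_⟩
    have hwfar : w ∈ far T₂ c₂ ↑(g (g.symm ⟨s(w,y), hE⟩)) := by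
      rw [hfi, mem_far]
      intro hr
      exact tree_bridge h₂ hwy ((mem_cl.mp hcy).trans hr).symm
    exact endpoint_in_far_eq h₂ (g _).2 (hbe₂ _) (hbF₂ _)
      (by rw [hfi]; exact Sym2.mem_mk_left _ _) hwfar
  -- membership of near endpoints moves to far endpoints across other edges
  have haiff₁ : ∀ {i j : ι}, i ≠ j →
      ((P₁ i).1 ∈ far T₁ c₁ ↑(f j) ↔ (P₁ i).2 ∈ far T₁ c₁ ↑(f j)) := by
    intro i j hij
    exact far_adj (hadj₁ i) (by rw [← hee₁ i]; exact hfne₁ hij)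
  have haiff₂ : ∀ {i j : ι}, i ≠ j →
      ((P₂ i).1 ∈ far T₂ c₂ ↑(g j) ↔ (P₂ i).2 ∈ far T₂ c₂ ↑(g j)) := by
    intro i j hij
    exact far_adj (hadj₂ i) (by rw [← hee₂ i]; exact hfne₂ hij)
  have hOsub₁ : ∀ {i j : ι}, i ≠ j → (P₁ i).2 ∈ far T₁ c₁ ↑(f j) →
      far T₁ c₁ ↑(f i) ⊆ far T₁ c₁ ↑(f j) :=
    fun hij hb => far_subset_far h₁ (hfne₁ hij) (hbe₁ _) hb
  have hOsub₂ : ∀ {i j : ι}, i ≠ j → (P₂ i).2 ∈ far T₂ c₂ ↑(g j) →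
      far T₂ c₂ ↑(g i) ⊆ far T₂ c₂ ↑(g j) :=
    fun hij hb => far_subset_far h₂ (hfne₂ hij) (hbe₂ _) hb
  -- the centroid-adjacency criterion
  have hMx₁ : ∀ i, (P₁ i).1 = c₁ ↔ ∀ k, ¬ (far T₁ c₁ ↑(f i) ⊂ far T₁ c₁ ↑(f k)) := by
    intro i
    constructor
    · intro hac k hik
      have hki : i ≠ k := fun h => ssubset_irrefl _ (h ▸ hik)
      have hmem : (P₁ i).1 ∈ far T₁ c₁ ↑(f k) :=
        (haiff₁ hki).mpr (hik.subset (hbF₁ i))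
      rw [hac] at hmem
      exact not_mem_far_self hmem
    · intro hmx
      by_contra hac
      obtain ⟨k, hbk⟩ := hbsurj₁ (P₁ i).1 hac
      have hki : k ≠ i := by
        rintro rfl
        exact haF₁ _ (hbk ▸ hbF₁ _)
      refine hmx k (ssubset_of_subset_of_ne (hOsub₁ hki.symm ?_) (hFne₁ hki.symm))
      exact (haiff₁ hki.symm).mp (by rw [← hbk]; exact hbF₁ k)
  have hMx₂ : ∀ i, (P₂ i).1 = c₂ ↔ ∀ k, ¬ (far T₂ c₂ ↑(g i) ⊂ far T₂ c₂ ↑(g k)) := by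
    intro i
    constructor
    · intro hac k hik
      have hki : i ≠ k := fun h => ssubset_irrefl _ (h ▸ hik)
      have hmem : (P₂ i).1 ∈ far T₂ c₂ ↑(g k) :=
        (haiff₂ hki).mpr (hik.subset (hbF₂ i))
      rw [hac] at hmem
      exact not_mem_far_self hmem
    · intro hmx
      by_contra hac
      obtain ⟨k, hbk⟩ := hbsurj₂ (P₂ i).1 hac
      have hki : k ≠ i := by
        rintro rfl
        exact haF₂ _ (hbk ▸ hbF₂ _)
      refine hmx k (ssubset_of_subset_of_ne (hOsub₂ hki.symm ?_) (hFne₂ hki.symm))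
      exact (haiff₂ hki.symm).mp (by rw [← hbk]; exact hbF₂ k)
  -- the covering criterion
  have hCov₁ : ∀ {i j : ι}, i ≠ j → ((P₁ i).1 = (P₁ j).2 ↔
      (far T₁ c₁ ↑(f i) ⊂ far T₁ c₁ ↑(f j) ∧ ∀ k, ¬ (far T₁ c₁ ↑(f i) ⊂ far T₁ c₁ ↑(f k)
        ∧ far T₁ c₁ ↑(f k) ⊂ far T₁ c₁ ↑(f j)))) := by
    intro i j hij
    constructor
    · intro hab
      have haFj : (P₁ i).1 ∈ far T₁ c₁ ↑(f j) := hab ▸ hbF₁ j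
      have hsubij : far T₁ c₁ ↑(f i) ⊆ far T₁ c₁ ↑(f j) :=
        hOsub₁ hij ((haiff₁ hij).mp haFj)
      refine ⟨ssubset_of_subset_of_ne hsubij (hFne₁ hij), ?_⟩
      rintro k ⟨hik, hkj⟩
      have hki : i ≠ k := fun h => ssubset_irrefl _ (h ▸ hik)
      have hkj' : k ≠ j := fun h => ssubset_irrefl _ (h ▸ hkj)
      have haFk : (P₁ i).1 ∈ far T₁ c₁ ↑(f k) :=
        (haiff₁ hki).mpr (hik.subset (hbF₁ i))
      have hjk : far T₁ c₁ ↑(f j) ⊆ far T₁ c₁ ↑(f k) :=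
        hOsub₁ (Ne.symm hkj') (by rw [hab] at haFk; exact haFk)
      exact hkj.ne (subset_antisymm hkj.subset hjk)
    · rintro ⟨hij_ss, hmid⟩
      have haFj : (P₁ i).1 ∈ far T₁ c₁ ↑(f j) :=
        (haiff₁ hij).mpr (hij_ss.subset (hbF₁ i))
      have hac : (P₁ i).1 ≠ c₁ := fun h => not_mem_far_self (h ▸ haFj)
      obtain ⟨k, hbk⟩ := hbsurj₁ (P₁ i).1 hac
      have hki : k ≠ i := by
        rintro rfl
        exact haF₁ _ (hbk ▸ hbF₁ _)
      have hik_ss : far T₁ c₁ ↑(f i) ⊂ far T₁ c₁ ↑(f k) := by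
        refine ssubset_of_subset_of_ne (hOsub₁ hki.symm ?_) (hFne₁ hki.symm)
        exact (haiff₁ hki.symm).mp (by rw [← hbk]; exact hbF₁ k)
      rcases eq_or_ne k j with rfl | hkj
      · exact hbk.symm
      · exfalso
        refine hmid k ⟨hik_ss, ?_⟩
        refine ssubset_of_subset_of_ne (hOsub₁ hkj ?_) (hFne₁ hkj)
        rw [hbk]
        exact haFj
  have hCov₂ : ∀ {i j : ι}, i ≠ j → ((P₂ i).1 = (P₂ j).2 ↔
      (far T₂ c₂ ↑(g i) ⊂ far T₂ c₂ ↑(g j) ∧ ∀ k, ¬ (far T₂ c₂ ↑(g i) ⊂ far T₂ c₂ ↑(g k)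
        ∧ far T₂ c₂ ↑(g k) ⊂ far T₂ c₂ ↑(g j)))) := by
    intro i j hij
    constructor
    · intro hab
      have haFj : (P₂ i).1 ∈ far T₂ c₂ ↑(g j) := hab ▸ hbF₂ j
      have hsubij : far T₂ c₂ ↑(g i) ⊆ far T₂ c₂ ↑(g j) :=
        hOsub₂ hij ((haiff₂ hij).mp haFj)
      refine ⟨ssubset_of_subset_of_ne hsubij (hFne₂ hij), ?_⟩
      rintro k ⟨hik, hkj⟩
      have hki : i ≠ k := fun h => ssubset_irrefl _ (h ▸ hik)
      have hkj' : k ≠ j := fun h => ssubset_irrefl _ (h ▸ hkj)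
      have haFk : (P₂ i).1 ∈ far T₂ c₂ ↑(g k) :=
        (haiff₂ hki).mpr (hik.subset (hbF₂ i))
      have hjk : far T₂ c₂ ↑(g j) ⊆ far T₂ c₂ ↑(g k) :=
        hOsub₂ (Ne.symm hkj') (by rw [hab] at haFk; exact haFk)
      exact hkj.ne (subset_antisymm hkj.subset hjk)
    · rintro ⟨hij_ss, hmid⟩
      have haFj : (P₂ i).1 ∈ far T₂ c₂ ↑(g j) :=
        (haiff₂ hij).mpr (hij_ss.subset (hbF₂ i))
      have hac : (P₂ i).1 ≠ c₂ := fun h => not_mem_far_self (h ▸ haFj)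
      obtain ⟨k, hbk⟩ := hbsurj₂ (P₂ i).1 hac
      have hki : k ≠ i := by
        rintro rfl
        exact haF₂ _ (hbk ▸ hbF₂ _)
      have hik_ss : far T₂ c₂ ↑(g i) ⊂ far T₂ c₂ ↑(g k) := by
        refine ssubset_of_subset_of_ne (hOsub₂ hki.symm ?_) (hFne₂ hki.symm)
        exact (haiff₂ hki.symm).mp (by rw [← hbk]; exact hbF₂ k)
      rcases eq_or_ne k j with rfl | hkj
      · exact hbk.symm
      · exfalso
        refine hmid k ⟨hik_ss, ?_⟩
        refine ssubset_of_subset_of_ne (hOsub₂ hkj ?_) (hFne₂ hkj)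
        rw [hbk]
        exact haFj
  -- the vertex bijection
  have hφc' : ∀ h : (c₁ : V₁) = c₁, True := fun _ => trivial
  let φf : V₁ → V₂ := fun w => if h : w = c₁ then c₂ else
    (P₂ (Classical.choose (hbsurj₁ w h))).2
  let φi : V₂ → V₁ := fun w => if h : w = c₂ then c₁ else
    (P₁ (Classical.choose (hbsurj₂ w h))).2
  have hφc : φf c₁ = c₂ := dif_pos rfl
  have hφic : φi c₂ = c₁ := dif_pos rfl
  have hφb : ∀ i, φf (P₁ i).2 = (P₂ i).2 := by
    intro i
    have h1 : φf (P₁ i).2 = (P₂ (Classical.choose (hbsurj₁ (P₁ i).2 (hbc₁ i)))).2 :=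
      dif_neg (hbc₁ i)
    rw [h1, hbinj₁ (Classical.choose_spec (hbsurj₁ (P₁ i).2 (hbc₁ i)))]
  have hφib : ∀ i, φi (P₂ i).2 = (P₁ i).2 := by
    intro i
    have h1 : φi (P₂ i).2 = (P₁ (Classical.choose (hbsurj₂ (P₂ i).2 (hbc₂ i)))).2 :=
      dif_neg (hbc₂ i)
    rw [h1, hbinj₂ (Classical.choose_spec (hbsurj₂ (P₂ i).2 (hbc₂ i)))]
  have hφir : ∀ w, φi (φf w) = w := by
    intro w
    rcases eq_or_ne w c₁ with rfl | hw
    · rw [hφc, hφic]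
    · obtain ⟨i, hbw⟩ := hbsurj₁ w hw
      rw [← hbw, hφb, hφib]
  have hφri : ∀ w, φf (φi w) = w := by
    intro w
    rcases eq_or_ne w c₂ with rfl | hw
    · rw [hφic, hφc]
    · obtain ⟨i, hbw⟩ := hbsurj₂ w hw
      rw [← hbw, hφib, hφb]
  have hφinj : Function.Injective φf := Function.LeftInverse.injective hφir
  -- the near endpoints are matched
  have hφa : ∀ i, φf (P₁ i).1 = (P₂ i).1 := by
    intro i
    rcases eq_or_ne (P₁ i).1 c₁ with hc | hc
    · have hmx₂ : (P₂ i).1 = c₂ := by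
        rw [hMx₂ i]
        intro k
        rw [← hssub i k]
        exact ((hMx₁ i).mp hc) k
      rw [hc, hφc, hmx₂]
    · obtain ⟨j, hbj⟩ := hbsurj₁ (P₁ i).1 hc
      have hji : i ≠ j := by
        rintro rfl
        exact haF₁ i (hbj ▸ hbF₁ i)
      have hcov1 := (hCov₁ hji).mp hbj.symm
      have hcov2 : (P₂ i).1 = (P₂ j).2 := by
        rw [hCov₂ hji]
        constructor
        · rw [← hssub i j]; exact hcov1.1
        · intro k
          rw [← hssub i k, ← hssub k j]
          exact hcov1.2 k
      rw [← hbj, hφb, hcov2]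
  -- edges are exactly the oriented pairs
  have hedge₁ : ∀ u w : V₁, T₁.Adj u w →
      ∃ i, ((P₁ i).1 = u ∧ (P₁ i).2 = w) ∨ ((P₁ i).1 = w ∧ (P₁ i).2 = u) := by
    intro u w hadj
    refine ⟨f.symm ⟨s(u,w), hadj⟩, ?_⟩
    have hfi : (f (f.symm ⟨s(u,w), hadj⟩) : Sym2 V₁) = s(u,w) := by
      rw [Equiv.apply_symm_apply]
    have heq := hee₁ (f.symm ⟨s(u,w), hadj⟩)
    rw [hfi] at heq
    rcases Sym2.eq_iff.mp heq with ⟨h1, h2⟩ | ⟨h1, h2⟩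
    · exact Or.inl ⟨h1.symm, h2.symm⟩
    · exact Or.inr ⟨h2.symm, h1.symm⟩
  have hedge₂ : ∀ u w : V₂, T₂.Adj u w →
      ∃ i, ((P₂ i).1 = u ∧ (P₂ i).2 = w) ∨ ((P₂ i).1 = w ∧ (P₂ i).2 = u) := by
    intro u w hadj
    refine ⟨g.symm ⟨s(u,w), hadj⟩, ?_⟩
    have hfi : (g (g.symm ⟨s(u,w), hadj⟩) : Sym2 V₂) = s(u,w) := by
      rw [Equiv.apply_symm_apply]
    have heq := hee₂ (g.symm ⟨s(u,w), hadj⟩)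
    rw [hfi] at heq
    rcases Sym2.eq_iff.mp heq with ⟨h1, h2⟩ | ⟨h1, h2⟩
    · exact Or.inl ⟨h1.symm, h2.symm⟩
    · exact Or.inr ⟨h2.symm, h1.symm⟩
  refine ⟨⟨⟨φf, φi, hφir, hφri⟩, @fun u w => ?_⟩, fun i => ?_⟩
  · constructor
    · intro hadj2
      obtain ⟨i, hcase⟩ := hedge₂ _ _ hadj2
      rcases hcase with ⟨ha, hb⟩ | ⟨ha, hb⟩
      · have hu : u = (P₁ i).1 := hφinj (by rw [hφa i, ha]; rfl)
        have hw : w = (P₁ i).2 := hφinj (by rw [hφb i, hb]; rfl)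
        rw [hu, hw]; exact hadj₁ i
      · have hu : u = (P₁ i).2 := hφinj (by rw [hφb i, hb]; rfl)
        have hw : w = (P₁ i).1 := hφinj (by rw [hφa i, ha]; rfl)
        rw [hu, hw]; exact (hadj₁ i).symm
    · intro hadj1
      obtain ⟨i, hcase⟩ := hedge₁ _ _ hadj1
      rcases hcase with ⟨ha, hb⟩ | ⟨ha, hb⟩
      · rw [← ha, ← hb]
        show T₂.Adj (φf (P₁ i).1) (φf (P₁ i).2)
        rw [hφa i, hφb i]
        exact hadj₂ i
      · rw [← ha, ← hb]
        show T₂.Adj (φf (P₁ i).2) (φf (P₁ i).1)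
        rw [hφa i, hφb i]
        exact (hadj₂ i).symm
  · rw [hee₁ i, hee₂ i]
    show Sym2.map φf s((P₁ i).1, (P₁ i).2) = s((P₂ i).1, (P₂ i).2)
    rw [Sym2.map_pair_eq, hφa i, hφb i]
end
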